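/- arXiv:2506.10273 — 3 statements merged into one kernel-verified Lean document; each statement's English description precedes it below -/
import Mathlib

section
/- For every k ∈ ℕ₀ and r ∈ (0,1] one has |ψ_k^ℓ(r)| ≤ (2/(2ℓ+1))^k (r^{ℓ+1}/k!) (∫₀^r s|V(s)| ds)^k, and for every k ≥ 1 and r ∈ (0,1] one has |(ψ_k^ℓ)'(r)| ≤ (2/(2ℓ+1))^{k−1} (r^ℓ/k!) (∫₀^r s|V(s)| ds)^k. -/
open Real Set MeasureTheory Filter

/-- The kernel `L_ℓ(r,s) = (1/(2ℓ+1))(r^{ℓ+1}/s^ℓ − s^{ℓ+1}/r^ℓ)`. -/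
noncomputable def besselKer (ℓ r s : ℝ) : ℝ :=
  (1 / (2 * ℓ + 1)) * (r ^ (ℓ + 1) / s ^ ℓ - s ^ (ℓ + 1) / r ^ ℓ)

/-- The iterates `ψ₀^ℓ(r) = r^{ℓ+1}`,
`ψ_k^ℓ(r) = ∫₀^r L_ℓ(r,s) V(s) ψ_{k−1}^ℓ(s) ds`. -/
noncomputable def sppsPsi (ℓ : ℝ) (V : ℝ → ℂ) : ℕ → ℝ → ℂ
  | 0 => fun r => ((r ^ (ℓ + 1) : ℝ) : ℂ)
  | k + 1 => fun r => ∫ s in Set.Ioc (0 : ℝ) r,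
      ((besselKer ℓ r s : ℝ) : ℂ) * V s * sppsPsi ℓ V k s

/-- The regular solution `w_ℓ(r) = Σ_{k=0}^∞ ψ_k^ℓ(r)`. -/
noncomputable def sppsW (ℓ : ℝ) (V : ℝ → ℂ) (r : ℝ) : ℂ :=
  ∑' k : ℕ, sppsPsi ℓ V k r

namespace SppsAux


variable (V : ℝ → ℂ)

noncomputable def gV : ℝ → ℝ := (Set.Ioc (0:ℝ) 1).indicator (fun s => s * ‖V s‖)

noncomputable def QV (r : ℝ) : ℝ := ∫ s in (0:ℝ)..r, gV V s

lemma gV_nonneg (s : ℝ) : 0 ≤ gV V s := by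
  unfold gV
  apply Set.indicator_nonneg
  intro s hs
  have : (0:ℝ) < s := hs.1
  positivity

variable {V}

lemma gV_int (hV : IntegrableOn (fun s : ℝ => s * ‖V s‖) (Set.Ioc 0 1)) :
    Integrable (gV V) :=
  (integrable_indicator_iff measurableSet_Ioc).2 hV

lemma QV_cont (hV : IntegrableOn (fun s : ℝ => s * ‖V s‖) (Set.Ioc 0 1)) :
    Continuous (QV V) :=
  intervalIntegral.continuous_primitive (fun _ _ => (gV_int hV).intervalIntegrable) 0

lemma QV_mono (hV : IntegrableOn (fun s : ℝ => s * ‖V s‖) (Set.Ioc 0 1)) :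
    Monotone (QV V) := by
  intro a b hab
  have h1 := intervalIntegral.integral_add_adjacent_intervals
    (a := 0) (b := a) (c := b) (μ := volume) (f := gV V)
    (gV_int hV).intervalIntegrable (gV_int hV).intervalIntegrable
  have h2 : 0 ≤ ∫ s in a..b, gV V s :=
    intervalIntegral.integral_nonneg hab (fun x _ => gV_nonneg V x)
  unfold QV
  linarith [h1]

lemma QV_nonneg (hV : IntegrableOn (fun s : ℝ => s * ‖V s‖) (Set.Ioc 0 1)) (r : ℝ) :
    0 ≤ QV V r := by
  rcases le_or_gt 0 r with h | h
  · have : QV V 0 = 0 := by simp [QV]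
    simpa [this] using QV_mono hV h
  · have : QV V r = 0 := by
      unfold QV
      rw [intervalIntegral.integral_congr (g := fun _ => (0:ℝ)) ?_, intervalIntegral.integral_zero]
      intro x hx
      rw [Set.uIcc_of_ge h.le] at hx
      have : x ≤ 0 := hx.2
      simp [gV, Set.indicator_apply_eq_zero]
      intro hx0
      linarith
    simp [this]

lemma QV_eq (hV : IntegrableOn (fun s : ℝ => s * ‖V s‖) (Set.Ioc 0 1))
    {r : ℝ} (h0 : 0 ≤ r) (h1 : r ≤ 1) :
    QV V r = ∫ s in Set.Ioc (0:ℝ) r, s * ‖V s‖ := by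
  unfold QV
  rw [intervalIntegral.integral_of_le h0]
  refine setIntegral_congr_fun measurableSet_Ioc ?_
  intro s hs
  have : s ∈ Set.Ioc (0:ℝ) 1 := ⟨hs.1, hs.2.trans h1⟩
  simp [gV, Set.indicator_of_mem this]

lemma QV_le_top (hV : IntegrableOn (fun s : ℝ => s * ‖V s‖) (Set.Ioc 0 1)) (r : ℝ) :
    QV V r ≤ QV V 1 := by
  rcases le_or_gt r 1 with h | h
  · exact QV_mono hV h
  · have : QV V r = QV V 1 := by
      have h1 := intervalIntegral.integral_add_adjacent_intervals
        (a := 0) (b := 1) (c := r) (μ := volume) (f := gV V)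
        (gV_int hV).intervalIntegrable (gV_int hV).intervalIntegrable
      have h2 : (∫ s in (1:ℝ)..r, gV V s) = 0 := by
        rw [intervalIntegral.integral_of_le h.le]
        rw [setIntegral_congr_fun measurableSet_Ioc (g := fun _ => (0:ℝ))]
        · simp
        · intro x hx
          simp only [gV, Set.indicator_apply_eq_zero]
          intro hx0
          exact absurd hx0.2 (not_le.2 hx.1)
      unfold QV
      linarith [h1]
    simp [this]

lemma GV_int (hVmeas : Measurable V)
    (hV : IntegrableOn (fun s : ℝ => s * ‖V s‖) (Set.Ioc 0 1)) (k : ℕ) :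
    Integrable (fun s => QV V s ^ k * gV V s) := by
  refine (gV_int hV).bdd_mul (c := QV V 1 ^ k) ((QV_cont hV).pow k).aestronglyMeasurable
    (Filter.Eventually.of_forall fun x => ?_)
  rw [Real.norm_eq_abs, abs_of_nonneg (pow_nonneg (QV_nonneg hV x) k)]
  exact pow_le_pow_left₀ (QV_nonneg hV x) (QV_le_top hV x) k



section Key
variable (gV : ℝ → ℝ) (QV : ℝ → ℝ)

-- abstract version of the key identity
lemma keyI_abs (hg_int : Integrable gV) (hg_nonneg : ∀ s, 0 ≤ gV s)
    (hQ : ∀ r, QV r = ∫ s in (0:ℝ)..r, gV s) (hQcont : Continuous QV)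
    (hGint : ∀ k : ℕ, Integrable (fun s => QV s ^ k * gV s)) :
    ∀ k : ℕ, ∀ r : ℝ, 0 ≤ r →
      ∫ s in Set.Ioc (0:ℝ) r, QV s ^ k * gV s = QV r ^ (k + 1) / (k + 1) := by
  have hQsub : ∀ t r : ℝ, t ≤ r → QV r - QV t = ∫ s in Set.Ioc t r, gV s := by
    intro t r htr
    have h1 := intervalIntegral.integral_add_adjacent_intervals
      (a := 0) (b := t) (c := r) (μ := volume) (f := gV)
      hg_int.intervalIntegrable hg_int.intervalIntegrable
    rw [hQ, hQ, ← intervalIntegral.integral_of_le htr]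
    linarith [h1]
  intro k
  induction k with
  | zero =>
    intro r hr
    simp only [pow_zero, one_mul, zero_add, pow_one, Nat.cast_zero]
    have := hQsub 0 r hr
    have hQ0 : QV 0 = 0 := by rw [hQ]; simp
    rw [hQ0, sub_zero] at this
    rw [← this]
    norm_num
  | succ k ih =>
    intro r hr
    set G : ℝ → ℝ := fun t => QV t ^ k * gV t with hG
    set f : ℝ → ℝ → ℝ := fun s t => if t ≤ s then gV s * G t else 0 with hf
    have hfind : Function.uncurry f =
        ({p : ℝ × ℝ | p.2 ≤ p.1}).indicator (fun p => gV p.1 * G p.2) := by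
      funext p
      simp only [Function.uncurry, hf, Set.indicator_apply, Set.mem_setOf_eq]
    have hInt : Integrable (Function.uncurry f)
        ((volume.restrict (Set.Ioc (0:ℝ) r)).prod (volume.restrict (Set.Ioc (0:ℝ) r))) := by
      rw [hfind]
      exact (Integrable.mul_prod hg_int.restrict (hGint k).restrict).indicator
        (measurableSet_le measurable_snd measurable_fst)
    have swap := MeasureTheory.integral_integral_swap hInt
    -- compute LHS
    have hL : (∫ s in Set.Ioc (0:ℝ) r, ∫ t in Set.Ioc (0:ℝ) r, f s t)
        = (∫ s in Set.Ioc (0:ℝ) r, QV s ^ (k+1) * gV s) / (k + 1) := by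
      rw [eq_div_iff (by positivity : ((k:ℝ) + 1) ≠ 0)]
      rw [← integral_mul_const]
      refine setIntegral_congr_fun measurableSet_Ioc ?_
      intro s hs
      show (∫ t in Set.Ioc (0:ℝ) r, f s t) * ((k:ℝ) + 1) = QV s ^ (k+1) * gV s
      have h1 : (fun t => f s t) = (Set.Iic s).indicator (fun t => gV s * G t) := by
        funext t
        simp only [hf, Set.indicator_apply, Set.mem_Iic]
      rw [h1, integral_indicator measurableSet_Iic, Measure.restrict_restrict measurableSet_Iic]
      have h2 : Set.Iic s ∩ Set.Ioc (0:ℝ) r = Set.Ioc 0 s := by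
        rw [Set.inter_comm, Set.Ioc_inter_Iic, min_eq_right hs.2]
      rw [h2, integral_const_mul, ih s hs.1.le]
      have hpow : QV s ^ (k+1+1) = QV s * QV s ^ (k+1) := (pow_succ' _ _)
      field_simp
    -- compute RHS
    have hR : (∫ t in Set.Ioc (0:ℝ) r, ∫ s in Set.Ioc (0:ℝ) r, f s t)
        = QV r * (QV r ^ (k+1) / (k+1)) - ∫ s in Set.Ioc (0:ℝ) r, QV s ^ (k+1) * gV s := by
      have hstep : ∀ t ∈ Set.Ioc (0:ℝ) r,
          (∫ s in Set.Ioc (0:ℝ) r, f s t) = QV r * G t - QV t ^ (k+1) * gV t := by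
        intro t ht
        have h1 : (fun s => f s t) = (Set.Ici t).indicator (fun s => gV s * G t) := by
          funext s
          simp only [hf, Set.indicator_apply, Set.mem_Ici]
        rw [h1, integral_indicator measurableSet_Ici, Measure.restrict_restrict measurableSet_Ici]
        have h2 : Set.Ici t ∩ Set.Ioc (0:ℝ) r = Set.Icc t r := by
          ext x
          simp only [Set.mem_inter_iff, Set.mem_Ici, Set.mem_Ioc, Set.mem_Icc]
          constructor
          · rintro ⟨h3, _, h5⟩; exact ⟨h3, h5⟩
          · rintro ⟨h3, h4⟩; exact ⟨h3, lt_of_lt_of_le ht.1 h3, h4⟩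
        rw [h2, integral_Icc_eq_integral_Ioc, integral_mul_const, ← hQsub t r ht.2]
        rw [hG]
        ring
      rw [setIntegral_congr_fun measurableSet_Ioc hstep]
      rw [integral_sub]
      · rw [integral_const_mul, ih r hr]
      · exact ((hGint k).restrict.const_mul (QV r))
      · exact (hGint (k+1)).restrict
    rw [hL, hR] at swap
    have hk1 : ((k:ℝ) + 1) ≠ 0 := by positivity
    have hcast : ((k+1:ℕ):ℝ) = (k:ℝ) + 1 := by push_cast; ring
    rw [hcast]
    have hp : QV r ^ (k+1+1) = QV r * QV r ^ (k+1) := pow_succ' _ _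
    field_simp at swap ⊢
    linarith [swap]


end Key

variable {ℓ : ℝ}

lemma ker_nonneg (hℓ : 0 < ℓ) {r s : ℝ} (hs : 0 < s) (hsr : s ≤ r) :
    s ^ (ℓ + 1) / r ^ ℓ ≤ r ^ (ℓ + 1) / s ^ ℓ := by
  have hr : 0 < r := lt_of_lt_of_le hs hsr
  rw [div_le_div_iff₀ (by positivity) (by positivity)]
  have h1 : s ^ (ℓ + 1) * s ^ ℓ = s ^ (ℓ + 1 + ℓ) := (Real.rpow_add hs _ _).symm
  have h2 : r ^ (ℓ + 1) * r ^ ℓ = r ^ (ℓ + 1 + ℓ) := (Real.rpow_add hr _ _).symm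
  rw [h1, h2]
  exact Real.rpow_le_rpow hs.le hsr (by linarith)

lemma ker_abs_le (hℓ : 0 < ℓ) {r s : ℝ} (hs : 0 < s) (hsr : s ≤ r) :
    |besselKer ℓ r s| ≤ 1 / (2 * ℓ + 1) * (r ^ (ℓ + 1) * s ^ (-ℓ)) := by
  have hr : 0 < r := lt_of_lt_of_le hs hsr
  have h0 : (0:ℝ) ≤ s ^ (ℓ + 1) / r ^ ℓ := by positivity
  have h1 := ker_nonneg hℓ hs hsr
  have h2 : |r ^ (ℓ + 1) / s ^ ℓ - s ^ (ℓ + 1) / r ^ ℓ| ≤ r ^ (ℓ + 1) / s ^ ℓ := by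
    rw [abs_of_nonneg (by linarith)]
    linarith
  have h3 : r ^ (ℓ + 1) / s ^ ℓ = r ^ (ℓ + 1) * s ^ (-ℓ) := by
    rw [Real.rpow_neg hs.le, div_eq_mul_inv]
  unfold besselKer
  rw [abs_mul, abs_of_nonneg (by positivity : (0:ℝ) ≤ 1 / (2 * ℓ + 1))]
  rw [← h3]
  exact mul_le_mul_of_nonneg_left h2 (by positivity)


section Step

variable (ℓ : ℝ) (V : ℝ → ℂ)

noncomputable def fA (ψ : ℝ → ℂ) : ℝ → ℂ :=
  (Set.Ioc (0:ℝ) 1).indicator fun s => ((s ^ (-ℓ) : ℝ) : ℂ) * V s * ψ s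

noncomputable def fB (ψ : ℝ → ℂ) : ℝ → ℂ :=
  (Set.Ioc (0:ℝ) 1).indicator fun s => ((s ^ (ℓ + 1) : ℝ) : ℂ) * V s * ψ s

noncomputable def AA (ψ : ℝ → ℂ) (x : ℝ) : ℂ := ∫ t in (0:ℝ)..x, fA ℓ V ψ t

noncomputable def BB (ψ : ℝ → ℂ) (x : ℝ) : ℂ := ∫ t in (0:ℝ)..x, fB ℓ V ψ t

variable {ℓ : ℝ} {V : ℝ → ℂ} {ψ : ℝ → ℂ} {k : ℕ} {C : ℝ}

lemma fA_norm_le (hV : IntegrableOn (fun s : ℝ => s * ‖V s‖) (Set.Ioc 0 1)) (hC : 0 ≤ C)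
    (hP : ∀ s ∈ Set.Ioc (0:ℝ) 1, ‖ψ s‖ ≤ C * (s ^ (ℓ + 1) * QV V s ^ k)) (s : ℝ) :
    ‖fA ℓ V ψ s‖ ≤ C * (QV V s ^ k * gV V s) := by
  have hRHS : 0 ≤ C * (QV V s ^ k * gV V s) :=
    mul_nonneg hC (mul_nonneg (pow_nonneg (QV_nonneg hV s) k) (gV_nonneg V s))
  by_cases h : s ∈ Set.Ioc (0:ℝ) 1
  · have hs : 0 < s := h.1
    rw [fA, Set.indicator_of_mem h]
    have hnorm : ‖((s ^ (-ℓ) : ℝ) : ℂ) * V s * ψ s‖ = s ^ (-ℓ) * ‖V s‖ * ‖ψ s‖ := by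
      rw [norm_mul, norm_mul, Complex.norm_real, Real.norm_eq_abs,
        abs_of_nonneg (Real.rpow_nonneg hs.le _)]
    rw [hnorm]
    have h1 : s ^ (-ℓ) * ‖V s‖ * ‖ψ s‖ ≤ s ^ (-ℓ) * ‖V s‖ * (C * (s ^ (ℓ + 1) * QV V s ^ k)) :=
      mul_le_mul_of_nonneg_left (hP s h) (by positivity)
    refine h1.trans_eq ?_
    have h2 : s ^ (-ℓ) * s ^ (ℓ + 1) = s := by
      rw [← Real.rpow_add hs]
      norm_num
    have h3 : gV V s = s * ‖V s‖ := Set.indicator_of_mem h _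
    rw [h3]
    calc s ^ (-ℓ) * ‖V s‖ * (C * (s ^ (ℓ + 1) * QV V s ^ k))
        = C * (QV V s ^ k * ((s ^ (-ℓ) * s ^ (ℓ + 1)) * ‖V s‖)) := by ring
      _ = C * (QV V s ^ k * (s * ‖V s‖)) := by rw [h2]
  · rw [fA, Set.indicator_of_notMem h]
    simpa using hRHS

lemma fB_norm_le (hℓ : 0 < ℓ)
    (hV : IntegrableOn (fun s : ℝ => s * ‖V s‖) (Set.Ioc 0 1)) (hC : 0 ≤ C)
    (hP : ∀ s ∈ Set.Ioc (0:ℝ) 1, ‖ψ s‖ ≤ C * (s ^ (ℓ + 1) * QV V s ^ k))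
    {r : ℝ} (hr1 : r ≤ 1) {s : ℝ} (hs' : s ∈ Set.Ioc (0:ℝ) r) :
    ‖fB ℓ V ψ s‖ ≤ C * r ^ (2 * ℓ + 1) * (QV V s ^ k * gV V s) := by
  have hs : 0 < s := hs'.1
  have h : s ∈ Set.Ioc (0:ℝ) 1 := ⟨hs, hs'.2.trans hr1⟩
  rw [fB, Set.indicator_of_mem h]
  have hnorm : ‖((s ^ (ℓ + 1) : ℝ) : ℂ) * V s * ψ s‖ = s ^ (ℓ + 1) * ‖V s‖ * ‖ψ s‖ := by
    rw [norm_mul, norm_mul, Complex.norm_real, Real.norm_eq_abs,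
      abs_of_nonneg (Real.rpow_nonneg hs.le _)]
  rw [hnorm]
  have h1 : s ^ (ℓ + 1) * ‖V s‖ * ‖ψ s‖ ≤ s ^ (ℓ + 1) * ‖V s‖ * (C * (s ^ (ℓ + 1) * QV V s ^ k)) :=
    mul_le_mul_of_nonneg_left (hP s h) (by positivity)
  refine h1.trans ?_
  have h2 : s ^ (ℓ + 1) * s ^ (ℓ + 1) = s ^ (2 * ℓ + 1) * s := by
    calc s ^ (ℓ + 1) * s ^ (ℓ + 1) = s ^ ((ℓ + 1) + (ℓ + 1)) := (Real.rpow_add hs _ _).symm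
      _ = s ^ ((2 * ℓ + 1) + 1) := by ring_nf
      _ = s ^ (2 * ℓ + 1) * s ^ (1:ℝ) := Real.rpow_add hs _ _
      _ = s ^ (2 * ℓ + 1) * s := by rw [Real.rpow_one]
  have h3 : gV V s = s * ‖V s‖ := Set.indicator_of_mem h _
  have h4 : s ^ (2 * ℓ + 1) ≤ r ^ (2 * ℓ + 1) :=
    Real.rpow_le_rpow hs.le hs'.2 (by linarith)
  calc s ^ (ℓ + 1) * ‖V s‖ * (C * (s ^ (ℓ + 1) * QV V s ^ k))
      = C * s ^ (2 * ℓ + 1) * (QV V s ^ k * (s * ‖V s‖)) := by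
        rw [show s ^ (ℓ + 1) * ‖V s‖ * (C * (s ^ (ℓ + 1) * QV V s ^ k))
            = C * (s ^ (ℓ + 1) * s ^ (ℓ + 1)) * (QV V s ^ k * ‖V s‖) by ring, h2]
        ring
    _ ≤ C * r ^ (2 * ℓ + 1) * (QV V s ^ k * (s * ‖V s‖)) := by
        have hnn : (0:ℝ) ≤ QV V s ^ k * (s * ‖V s‖) :=
          mul_nonneg (pow_nonneg (QV_nonneg hV s) k) (by positivity)
        have h5 : C * s ^ (2 * ℓ + 1) ≤ C * r ^ (2 * ℓ + 1) :=
          mul_le_mul_of_nonneg_left h4 hC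
        exact mul_le_mul_of_nonneg_right h5 hnn
    _ = C * r ^ (2 * ℓ + 1) * (QV V s ^ k * gV V s) := by rw [h3]

lemma fB_norm_le_global (hℓ : 0 < ℓ)
    (hV : IntegrableOn (fun s : ℝ => s * ‖V s‖) (Set.Ioc 0 1)) (hC : 0 ≤ C)
    (hP : ∀ s ∈ Set.Ioc (0:ℝ) 1, ‖ψ s‖ ≤ C * (s ^ (ℓ + 1) * QV V s ^ k)) (s : ℝ) :
    ‖fB ℓ V ψ s‖ ≤ C * (QV V s ^ k * gV V s) := by
  have hRHS : 0 ≤ C * (QV V s ^ k * gV V s) :=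
    mul_nonneg hC (mul_nonneg (pow_nonneg (QV_nonneg hV s) k) (gV_nonneg V s))
  by_cases h : s ∈ Set.Ioc (0:ℝ) 1
  · have := fB_norm_le hℓ hV hC hP le_rfl h
    rw [Real.one_rpow] at this
    simpa using this
  · rw [fB, Set.indicator_of_notMem h]
    simpa using hRHS

lemma rpowA_contOn : ContinuousOn (fun s : ℝ => ((s ^ (-ℓ) : ℝ) : ℂ)) (Set.Ioc (0:ℝ) 1) :=
  Complex.continuous_ofReal.comp_continuousOn
    (continuousOn_id.rpow_const fun x hx => Or.inl (ne_of_gt hx.1))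

lemma rpowB_contOn : ContinuousOn (fun s : ℝ => ((s ^ (ℓ + 1) : ℝ) : ℂ)) (Set.Ioc (0:ℝ) 1) :=
  Complex.continuous_ofReal.comp_continuousOn
    (continuousOn_id.rpow_const fun x hx => Or.inl (ne_of_gt hx.1))

lemma fA_meas (hVmeas : Measurable V) (hψ : ContinuousOn ψ (Set.Ioc (0:ℝ) 1)) :
    AEStronglyMeasurable (fA ℓ V ψ) volume := by
  rw [fA, aestronglyMeasurable_indicator_iff measurableSet_Ioc]
  exact ((rpowA_contOn.aestronglyMeasurable measurableSet_Ioc).mul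
    hVmeas.aestronglyMeasurable.restrict).mul (hψ.aestronglyMeasurable measurableSet_Ioc)

lemma fB_meas (hVmeas : Measurable V) (hψ : ContinuousOn ψ (Set.Ioc (0:ℝ) 1)) :
    AEStronglyMeasurable (fB ℓ V ψ) volume := by
  rw [fB, aestronglyMeasurable_indicator_iff measurableSet_Ioc]
  exact ((rpowB_contOn.aestronglyMeasurable measurableSet_Ioc).mul
    hVmeas.aestronglyMeasurable.restrict).mul (hψ.aestronglyMeasurable measurableSet_Ioc)

lemma fA_int (hVmeas : Measurable V)
    (hV : IntegrableOn (fun s : ℝ => s * ‖V s‖) (Set.Ioc 0 1))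
    (hψ : ContinuousOn ψ (Set.Ioc (0:ℝ) 1)) (hC : 0 ≤ C)
    (hP : ∀ s ∈ Set.Ioc (0:ℝ) 1, ‖ψ s‖ ≤ C * (s ^ (ℓ + 1) * QV V s ^ k)) :
    Integrable (fA ℓ V ψ) := by
  refine Integrable.mono ((GV_int hVmeas hV k).const_mul C) (fA_meas hVmeas hψ) ?_
  refine Filter.Eventually.of_forall fun s => ?_
  have h1 := fA_norm_le hV hC hP s
  have h2 : 0 ≤ C * (QV V s ^ k * gV V s) :=
    mul_nonneg hC (mul_nonneg (pow_nonneg (QV_nonneg hV s) k) (gV_nonneg V s))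
  rwa [Real.norm_eq_abs, abs_of_nonneg h2]

lemma fB_int (hℓ : 0 < ℓ) (hVmeas : Measurable V)
    (hV : IntegrableOn (fun s : ℝ => s * ‖V s‖) (Set.Ioc 0 1))
    (hψ : ContinuousOn ψ (Set.Ioc (0:ℝ) 1)) (hC : 0 ≤ C)
    (hP : ∀ s ∈ Set.Ioc (0:ℝ) 1, ‖ψ s‖ ≤ C * (s ^ (ℓ + 1) * QV V s ^ k)) :
    Integrable (fB ℓ V ψ) := by
  refine Integrable.mono ((GV_int hVmeas hV k).const_mul C) (fB_meas hVmeas hψ) ?_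
  refine Filter.Eventually.of_forall fun s => ?_
  have h1 := fB_norm_le_global hℓ hV hC hP s
  have h2 : 0 ≤ C * (QV V s ^ k * gV V s) :=
    mul_nonneg hC (mul_nonneg (pow_nonneg (QV_nonneg hV s) k) (gV_nonneg V s))
  rwa [Real.norm_eq_abs, abs_of_nonneg h2]

lemma AA_eq {x : ℝ} (hx : x ∈ Set.Icc (0:ℝ) 1) :
    AA ℓ V ψ x = ∫ s in Set.Ioc (0:ℝ) x, ((s ^ (-ℓ) : ℝ) : ℂ) * V s * ψ s := by
  rw [AA, intervalIntegral.integral_of_le hx.1]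
  refine setIntegral_congr_fun measurableSet_Ioc fun s hs => ?_
  have hmem : s ∈ Set.Ioc (0:ℝ) 1 := ⟨hs.1, hs.2.trans hx.2⟩
  rw [fA, Set.indicator_of_mem hmem]

lemma BB_eq {x : ℝ} (hx : x ∈ Set.Icc (0:ℝ) 1) :
    BB ℓ V ψ x = ∫ s in Set.Ioc (0:ℝ) x, ((s ^ (ℓ + 1) : ℝ) : ℂ) * V s * ψ s := by
  rw [BB, intervalIntegral.integral_of_le hx.1]
  refine setIntegral_congr_fun measurableSet_Ioc fun s hs => ?_
  have hmem : s ∈ Set.Ioc (0:ℝ) 1 := ⟨hs.1, hs.2.trans hx.2⟩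
  rw [fB, Set.indicator_of_mem hmem]

lemma keyI (hVmeas : Measurable V)
    (hV : IntegrableOn (fun s : ℝ => s * ‖V s‖) (Set.Ioc 0 1)) (k : ℕ) {r : ℝ} (hr : 0 ≤ r) :
    ∫ s in Set.Ioc (0:ℝ) r, QV V s ^ k * gV V s = QV V r ^ (k + 1) / (k + 1) :=
  keyI_abs (gV V) (QV V) (gV_int hV) (gV_nonneg V) (fun _ => rfl) (QV_cont hV)
    (GV_int hVmeas hV) k r hr

lemma AA_cont (hVmeas : Measurable V)
    (hV : IntegrableOn (fun s : ℝ => s * ‖V s‖) (Set.Ioc 0 1))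
    (hψ : ContinuousOn ψ (Set.Ioc (0:ℝ) 1)) (hC : 0 ≤ C)
    (hP : ∀ s ∈ Set.Ioc (0:ℝ) 1, ‖ψ s‖ ≤ C * (s ^ (ℓ + 1) * QV V s ^ k)) :
    Continuous (AA ℓ V ψ) :=
  intervalIntegral.continuous_primitive
    (fun _ _ => (fA_int hVmeas hV hψ hC hP).intervalIntegrable) 0

lemma BB_cont (hℓ : 0 < ℓ) (hVmeas : Measurable V)
    (hV : IntegrableOn (fun s : ℝ => s * ‖V s‖) (Set.Ioc 0 1))
    (hψ : ContinuousOn ψ (Set.Ioc (0:ℝ) 1)) (hC : 0 ≤ C)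
    (hP : ∀ s ∈ Set.Ioc (0:ℝ) 1, ‖ψ s‖ ≤ C * (s ^ (ℓ + 1) * QV V s ^ k)) :
    Continuous (BB ℓ V ψ) :=
  intervalIntegral.continuous_primitive
    (fun _ _ => (fB_int hℓ hVmeas hV hψ hC hP).intervalIntegrable) 0

lemma rep (hℓ : 0 < ℓ) (hVmeas : Measurable V)
    (hV : IntegrableOn (fun s : ℝ => s * ‖V s‖) (Set.Ioc 0 1))
    (hψ : ContinuousOn ψ (Set.Ioc (0:ℝ) 1)) (hC : 0 ≤ C)
    (hP : ∀ s ∈ Set.Ioc (0:ℝ) 1, ‖ψ s‖ ≤ C * (s ^ (ℓ + 1) * QV V s ^ k))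
    {x : ℝ} (hx : x ∈ Set.Icc (0:ℝ) 1) :
    (∫ s in Set.Ioc (0:ℝ) x, ((besselKer ℓ x s : ℝ) : ℂ) * V s * ψ s)
      = ((1 / (2 * ℓ + 1) : ℝ) : ℂ) *
        (((x ^ (ℓ + 1) : ℝ) : ℂ) * AA ℓ V ψ x - ((x ^ (-ℓ) : ℝ) : ℂ) * BB ℓ V ψ x) := by
  rcases eq_or_lt_of_le hx.1 with h0 | h0
  · rw [← h0]
    have e1 : (0:ℝ) ^ (ℓ + 1) = 0 := Real.zero_rpow (by positivity)
    have e2 : (0:ℝ) ^ (-ℓ) = 0 := Real.zero_rpow (by simp [ne_of_gt hℓ])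
    simp [e1, e2]
  · have hIocIcc : Set.Ioc (0:ℝ) x ⊆ Set.Ioc (0:ℝ) 1 := Set.Ioc_subset_Ioc le_rfl hx.2
    have hintA : IntegrableOn (fun s : ℝ => ((s ^ (-ℓ) : ℝ) : ℂ) * V s * ψ s)
        (Set.Ioc (0:ℝ) x) := by
      refine IntegrableOn.congr_fun ((fA_int hVmeas hV hψ hC hP).integrableOn.mono_set
        (Set.subset_univ _)) ?_ measurableSet_Ioc
      intro s hs
      rw [fA, Set.indicator_of_mem (hIocIcc hs)]
    have hintB : IntegrableOn (fun s : ℝ => ((s ^ (ℓ + 1) : ℝ) : ℂ) * V s * ψ s)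
        (Set.Ioc (0:ℝ) x) := by
      refine IntegrableOn.congr_fun ((fB_int hℓ hVmeas hV hψ hC hP).integrableOn.mono_set
        (Set.subset_univ _)) ?_ measurableSet_Ioc
      intro s hs
      rw [fB, Set.indicator_of_mem (hIocIcc hs)]
    rw [AA_eq hx, BB_eq hx, ← integral_const_mul, ← integral_const_mul,
      ← integral_sub (hintA.const_mul _) (hintB.const_mul _), ← integral_const_mul]
    refine setIntegral_congr_fun measurableSet_Ioc fun s hs => ?_
    have hs0 : (0:ℝ) < s := hs.1
    have hker : besselKer ℓ x s
        = 1 / (2 * ℓ + 1) * (x ^ (ℓ + 1) * s ^ (-ℓ) - x ^ (-ℓ) * s ^ (ℓ + 1)) := by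
      unfold besselKer
      rw [Real.rpow_neg hs0.le, Real.rpow_neg h0.le, div_eq_mul_inv, div_eq_mul_inv]
      ring
    rw [hker]
    push_cast
    ring

lemma next_norm_le (hℓ : 0 < ℓ) (hVmeas : Measurable V)
    (hV : IntegrableOn (fun s : ℝ => s * ‖V s‖) (Set.Ioc 0 1)) (hC : 0 ≤ C)
    (hP : ∀ s ∈ Set.Ioc (0:ℝ) 1, ‖ψ s‖ ≤ C * (s ^ (ℓ + 1) * QV V s ^ k))
    {r : ℝ} (hr : r ∈ Set.Ioc (0:ℝ) 1) :
    ‖∫ s in Set.Ioc (0:ℝ) r, ((besselKer ℓ r s : ℝ) : ℂ) * V s * ψ s‖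
      ≤ C / (2 * ℓ + 1) * r ^ (ℓ + 1) * (QV V r ^ (k + 1) / (k + 1)) := by
  have hkey := keyI hVmeas hV k hr.1.le
  set M : ℝ := C / (2 * ℓ + 1) * r ^ (ℓ + 1) with hM
  have hM0 : 0 ≤ M :=
    mul_nonneg (div_nonneg hC (by linarith)) (Real.rpow_nonneg hr.1.le _)
  have hdom : Integrable (fun s => M * (QV V s ^ k * gV V s))
      (volume.restrict (Set.Ioc (0:ℝ) r)) := ((GV_int hVmeas hV k).restrict).const_mul M
  have hb : ∀ᵐ s ∂(volume.restrict (Set.Ioc (0:ℝ) r)),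
      ‖((besselKer ℓ r s : ℝ) : ℂ) * V s * ψ s‖ ≤ M * (QV V s ^ k * gV V s) := by
    filter_upwards [ae_restrict_mem measurableSet_Ioc] with s hs
    have hs0 : (0:ℝ) < s := hs.1
    have hmem : s ∈ Set.Ioc (0:ℝ) 1 := ⟨hs0, hs.2.trans hr.2⟩
    have hnorm : ‖((besselKer ℓ r s : ℝ) : ℂ) * V s * ψ s‖
        = |besselKer ℓ r s| * ‖V s‖ * ‖ψ s‖ := by
      rw [norm_mul, norm_mul, Complex.norm_real, Real.norm_eq_abs]
    rw [hnorm]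
    have h1 : |besselKer ℓ r s| * ‖V s‖ * ‖ψ s‖
        ≤ (1 / (2 * ℓ + 1) * (r ^ (ℓ + 1) * s ^ (-ℓ))) * ‖V s‖ * (C * (s ^ (ℓ + 1) * QV V s ^ k)) := by
      have hker := ker_abs_le hℓ hs0 hs.2
      have hψb := hP s hmem
      have hA : |besselKer ℓ r s| * ‖V s‖ ≤ (1 / (2 * ℓ + 1) * (r ^ (ℓ + 1) * s ^ (-ℓ))) * ‖V s‖ :=
        mul_le_mul_of_nonneg_right hker (norm_nonneg _)
      refine mul_le_mul hA hψb (norm_nonneg _) ?_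
      exact mul_nonneg (mul_nonneg (by positivity)
        (mul_nonneg (Real.rpow_nonneg hr.1.le _) (Real.rpow_nonneg hs0.le _))) (norm_nonneg _)
    refine h1.trans_eq ?_
    have h2 : s ^ (-ℓ) * s ^ (ℓ + 1) = s := by
      rw [← Real.rpow_add hs0]
      norm_num
    have h3 : gV V s = s * ‖V s‖ := Set.indicator_of_mem hmem _
    rw [hM, h3]
    calc 1 / (2 * ℓ + 1) * (r ^ (ℓ + 1) * s ^ (-ℓ)) * ‖V s‖ * (C * (s ^ (ℓ + 1) * QV V s ^ k))
        = C / (2 * ℓ + 1) * r ^ (ℓ + 1) * (QV V s ^ k * ((s ^ (-ℓ) * s ^ (ℓ + 1)) * ‖V s‖)) := by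
          ring
      _ = C / (2 * ℓ + 1) * r ^ (ℓ + 1) * (QV V s ^ k * (s * ‖V s‖)) := by rw [h2]
  calc ‖∫ s in Set.Ioc (0:ℝ) r, ((besselKer ℓ r s : ℝ) : ℂ) * V s * ψ s‖
      ≤ ∫ s in Set.Ioc (0:ℝ) r, M * (QV V s ^ k * gV V s) :=
        norm_integral_le_of_norm_le hdom hb
    _ = M * (QV V r ^ (k + 1) / (k + 1)) := by rw [integral_const_mul, hkey]

lemma pack (hℓ : 0 < ℓ) (hVmeas : Measurable V)
    (hV : IntegrableOn (fun s : ℝ => s * ‖V s‖) (Set.Ioc 0 1)) :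
    ∀ k : ℕ, ContinuousOn (sppsPsi ℓ V k) (Set.Ioc (0:ℝ) 1) ∧
      ∀ r ∈ Set.Ioc (0:ℝ) 1, ‖sppsPsi ℓ V k r‖
        ≤ (2 / (2 * ℓ + 1)) ^ k / (k.factorial : ℝ) * (r ^ (ℓ + 1) * QV V r ^ k) := by
  intro k
  induction k with
  | zero =>
    constructor
    · exact Complex.continuous_ofReal.comp_continuousOn
        (continuousOn_id.rpow_const fun x hx => Or.inl (ne_of_gt hx.1))
    · intro r hr
      have : ‖sppsPsi ℓ V 0 r‖ = r ^ (ℓ + 1) := by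
        rw [show sppsPsi ℓ V 0 r = ((r ^ (ℓ + 1) : ℝ) : ℂ) from rfl, Complex.norm_real,
          Real.norm_eq_abs, abs_of_nonneg (Real.rpow_nonneg hr.1.le _)]
      rw [this]
      simp
  | succ k ih =>
    have h2ℓ : (0:ℝ) < 2 * ℓ + 1 := by linarith
    have hC : (0:ℝ) ≤ (2 / (2 * ℓ + 1)) ^ k / (k.factorial : ℝ) := by positivity
    have hcont := ih.1
    have hP := ih.2
    constructor
    · have hF : ContinuousOn (fun x => ((1 / (2 * ℓ + 1) : ℝ) : ℂ) *
          (((x ^ (ℓ + 1) : ℝ) : ℂ) * AA ℓ V (sppsPsi ℓ V k) x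
            - ((x ^ (-ℓ) : ℝ) : ℂ) * BB ℓ V (sppsPsi ℓ V k) x)) (Set.Ioc (0:ℝ) 1) := by
        refine continuousOn_const.mul (ContinuousOn.sub ?_ ?_)
        · exact rpowB_contOn.mul (AA_cont hVmeas hV hcont hC hP).continuousOn
        · exact rpowA_contOn.mul (BB_cont hℓ hVmeas hV hcont hC hP).continuousOn
      refine hF.congr fun x hx => ?_
      rw [show sppsPsi ℓ V (k + 1) x = ∫ s in Set.Ioc (0:ℝ) x,
        ((besselKer ℓ x s : ℝ) : ℂ) * V s * sppsPsi ℓ V k s from rfl]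
      exact rep hℓ hVmeas hV hcont hC hP ⟨hx.1.le, hx.2⟩
    · intro r hr
      have h1 := next_norm_le hℓ hVmeas hV hC hP hr
      rw [show sppsPsi ℓ V (k + 1) r = ∫ s in Set.Ioc (0:ℝ) r,
        ((besselKer ℓ r s : ℝ) : ℂ) * V s * sppsPsi ℓ V k s from rfl]
      refine h1.trans ?_
      have hnn : (0:ℝ) ≤ r ^ (ℓ + 1) * QV V r ^ (k + 1) :=
        mul_nonneg (Real.rpow_nonneg hr.1.le _) (pow_nonneg (QV_nonneg hV r) _)
      set p : ℝ := (2 / (2 * ℓ + 1)) ^ k with hp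
      have hkf : (0:ℝ) < (k.factorial : ℝ) := by exact_mod_cast k.factorial_pos
      have hk1 : (0:ℝ) < (k:ℝ) + 1 := by positivity
      have heq1 : p / (k.factorial : ℝ) / (2 * ℓ + 1) * r ^ (ℓ + 1) * (QV V r ^ (k + 1) / ((k:ℝ) + 1))
          = (p / (k.factorial : ℝ) / (2 * ℓ + 1) * (1 / ((k:ℝ) + 1))) * (r ^ (ℓ + 1) * QV V r ^ (k + 1)) := by
        ring
      have hfact : (((k + 1).factorial : ℕ) : ℝ) = ((k:ℝ) + 1) * (k.factorial : ℝ) := by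
        rw [Nat.factorial_succ]
        push_cast
        ring
      have hp0 : 0 ≤ p := by positivity
      have hLHS0 : 0 ≤ p / (k.factorial : ℝ) / (2 * ℓ + 1) * (1 / ((k:ℝ) + 1)) := by positivity
      have h2le : p / (k.factorial : ℝ) / (2 * ℓ + 1) * (1 / ((k:ℝ) + 1))
          ≤ 2 * (p / (k.factorial : ℝ) / (2 * ℓ + 1) * (1 / ((k:ℝ) + 1))) := by
        nlinarith [hLHS0]
      have heq2 : 2 * (p / (k.factorial : ℝ) / (2 * ℓ + 1) * (1 / ((k:ℝ) + 1)))
          = (2 / (2 * ℓ + 1)) ^ (k + 1) / (((k + 1).factorial : ℕ) : ℝ) := by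
        rw [pow_succ, ← hp, hfact]
        field_simp
      have hconst := h2le.trans_eq heq2
      calc (2 / (2 * ℓ + 1)) ^ k / (k.factorial : ℝ) / (2 * ℓ + 1) * r ^ (ℓ + 1)
            * (QV V r ^ (k + 1) / ((k:ℝ) + 1))
          = (p / (k.factorial : ℝ) / (2 * ℓ + 1) * (1 / ((k:ℝ) + 1)))
            * (r ^ (ℓ + 1) * QV V r ^ (k + 1)) := heq1
        _ ≤ (2 / (2 * ℓ + 1)) ^ (k + 1) / (((k + 1).factorial : ℕ) : ℝ)
            * (r ^ (ℓ + 1) * QV V r ^ (k + 1)) := mul_le_mul_of_nonneg_right hconst hnn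

lemma QV_sub (hV : IntegrableOn (fun s : ℝ => s * ‖V s‖) (Set.Ioc 0 1))
    {t u : ℝ} (htu : t ≤ u) : QV V u - QV V t = ∫ s in Set.Ioc t u, gV V s := by
  have h1 := intervalIntegral.integral_add_adjacent_intervals
    (a := 0) (b := t) (c := u) (μ := volume) (f := gV V)
    (gV_int hV).intervalIntegrable (gV_int hV).intervalIntegrable
  rw [show QV V u = ∫ s in (0:ℝ)..u, gV V s from rfl,
    show QV V t = ∫ s in (0:ℝ)..t, gV V s from rfl, ← intervalIntegral.integral_of_le htu]
  linarith [h1]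

lemma rpow_lip (hℓ : 0 < ℓ) {a b : ℝ} (ha : a ∈ Set.Icc (0:ℝ) 1) (hb : b ∈ Set.Icc (0:ℝ) 1) :
    |b ^ (2 * ℓ + 1) - a ^ (2 * ℓ + 1)| ≤ (2 * ℓ + 1) * |b - a| := by
  have hderiv : ∀ x ∈ Set.Icc (0:ℝ) 1, HasDerivWithinAt (fun t : ℝ => t ^ (2 * ℓ + 1))
      ((2 * ℓ + 1) * x ^ (2 * ℓ)) (Set.Icc 0 1) x := by
    intro x _
    have h := (Real.hasDerivAt_rpow_const (x := x) (p := 2 * ℓ + 1)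
      (Or.inr (by linarith))).hasDerivWithinAt (s := Set.Icc (0:ℝ) 1)
    simpa [show (2 * ℓ + 1 - 1 : ℝ) = 2 * ℓ by ring] using h
  have hbound : ∀ x ∈ Set.Icc (0:ℝ) 1, ‖(2 * ℓ + 1) * x ^ (2 * ℓ)‖ ≤ 2 * ℓ + 1 := by
    intro x hx
    rw [Real.norm_eq_abs, abs_mul, abs_of_nonneg (by linarith : (0:ℝ) ≤ 2 * ℓ + 1),
      abs_of_nonneg (Real.rpow_nonneg hx.1 _)]
    have h1 : x ^ (2 * ℓ) ≤ 1 := Real.rpow_le_one hx.1 hx.2 (by linarith)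
    nlinarith
  have h := Convex.norm_image_sub_le_of_norm_hasDerivWithin_le hderiv hbound
    (convex_Icc 0 1) ha hb
  simpa [Real.norm_eq_abs] using h

lemma AA_norm_le (hVmeas : Measurable V)
    (hV : IntegrableOn (fun s : ℝ => s * ‖V s‖) (Set.Ioc 0 1)) (hC : 0 ≤ C)
    (hP : ∀ s ∈ Set.Ioc (0:ℝ) 1, ‖ψ s‖ ≤ C * (s ^ (ℓ + 1) * QV V s ^ k))
    {r : ℝ} (hr : r ∈ Set.Ioc (0:ℝ) 1) :
    ‖AA ℓ V ψ r‖ ≤ C * (QV V r ^ (k + 1) / (k + 1)) := by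
  rw [AA_eq ⟨hr.1.le, hr.2⟩]
  have hdom : Integrable (fun s => C * (QV V s ^ k * gV V s))
      (volume.restrict (Set.Ioc (0:ℝ) r)) := ((GV_int hVmeas hV k).restrict).const_mul C
  have hb : ∀ᵐ s ∂(volume.restrict (Set.Ioc (0:ℝ) r)),
      ‖((s ^ (-ℓ) : ℝ) : ℂ) * V s * ψ s‖ ≤ C * (QV V s ^ k * gV V s) := by
    filter_upwards [ae_restrict_mem measurableSet_Ioc] with s hs
    have hmem : s ∈ Set.Ioc (0:ℝ) 1 := ⟨hs.1, hs.2.trans hr.2⟩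
    have h := fA_norm_le hV hC hP s
    rwa [fA, Set.indicator_of_mem hmem] at h
  calc ‖∫ s in Set.Ioc (0:ℝ) r, ((s ^ (-ℓ) : ℝ) : ℂ) * V s * ψ s‖
      ≤ ∫ s in Set.Ioc (0:ℝ) r, C * (QV V s ^ k * gV V s) :=
        norm_integral_le_of_norm_le hdom hb
    _ = C * (QV V r ^ (k + 1) / (k + 1)) := by
        rw [integral_const_mul, keyI hVmeas hV k hr.1.le]

lemma BB_norm_le (hℓ : 0 < ℓ) (hVmeas : Measurable V)
    (hV : IntegrableOn (fun s : ℝ => s * ‖V s‖) (Set.Ioc 0 1)) (hC : 0 ≤ C)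
    (hP : ∀ s ∈ Set.Ioc (0:ℝ) 1, ‖ψ s‖ ≤ C * (s ^ (ℓ + 1) * QV V s ^ k))
    {r : ℝ} (hr : r ∈ Set.Ioc (0:ℝ) 1) :
    ‖BB ℓ V ψ r‖ ≤ C * r ^ (2 * ℓ + 1) * (QV V r ^ (k + 1) / (k + 1)) := by
  rw [BB_eq ⟨hr.1.le, hr.2⟩]
  have hrp : 0 ≤ C * r ^ (2 * ℓ + 1) := mul_nonneg hC (Real.rpow_nonneg hr.1.le _)
  have hdom : Integrable (fun s => C * r ^ (2 * ℓ + 1) * (QV V s ^ k * gV V s))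
      (volume.restrict (Set.Ioc (0:ℝ) r)) :=
    ((GV_int hVmeas hV k).restrict).const_mul _
  have hb : ∀ᵐ s ∂(volume.restrict (Set.Ioc (0:ℝ) r)),
      ‖((s ^ (ℓ + 1) : ℝ) : ℂ) * V s * ψ s‖ ≤ C * r ^ (2 * ℓ + 1) * (QV V s ^ k * gV V s) := by
    filter_upwards [ae_restrict_mem measurableSet_Ioc] with s hs
    have hmem : s ∈ Set.Ioc (0:ℝ) 1 := ⟨hs.1, hs.2.trans hr.2⟩
    have h := fB_norm_le hℓ hV hC hP hr.2 hs
    rwa [fB, Set.indicator_of_mem hmem] at h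
  calc ‖∫ s in Set.Ioc (0:ℝ) r, ((s ^ (ℓ + 1) : ℝ) : ℂ) * V s * ψ s‖
      ≤ ∫ s in Set.Ioc (0:ℝ) r, C * r ^ (2 * ℓ + 1) * (QV V s ^ k * gV V s) :=
        norm_integral_le_of_norm_le hdom hb
    _ = C * r ^ (2 * ℓ + 1) * (QV V r ^ (k + 1) / (k + 1)) := by
        rw [integral_const_mul, keyI hVmeas hV k hr.1.le]

lemma Phi_norm_le (hℓ : 0 < ℓ)
    (hV : IntegrableOn (fun s : ℝ => s * ‖V s‖) (Set.Ioc 0 1)) (hC : 0 ≤ C)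
    (hP : ∀ s ∈ Set.Ioc (0:ℝ) 1, ‖ψ s‖ ≤ C * (s ^ (ℓ + 1) * QV V s ^ k))
    {r x s : ℝ} (hr : r ∈ Set.Ioc (0:ℝ) 1) (hx : x ∈ Set.Icc (0:ℝ) 1)
    (hnear : |x - r| ≤ r / 2) (hs : s ∈ Set.uIoc r x) :
    ‖((r ^ (ℓ + 1) : ℝ) : ℂ) * fA ℓ V ψ s - ((r ^ (-ℓ) : ℝ) : ℂ) * fB ℓ V ψ s‖
      ≤ C * QV V 1 ^ k * ((2 * ℓ + 1) * r ^ (-ℓ)) * |x - r| * gV V s := by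
  have hr0 : (0:ℝ) < r := hr.1
  rw [Set.uIoc] at hs
  have habs := abs_le.1 hnear
  have hminx : r / 2 ≤ min r x := le_min (by linarith) (by linarith)
  have hs0 : (0:ℝ) < s := lt_of_lt_of_le (by linarith : (0:ℝ) < r / 2) (hminx.trans hs.1.le)
  have hs1 : s ≤ 1 := hs.2.trans (max_le hr.2 hx.2)
  have hmem : s ∈ Set.Ioc (0:ℝ) 1 := ⟨hs0, hs1⟩
  have hsr : |s - r| ≤ |x - r| := by
    have h1 : min r x ≤ r := min_le_left _ _
    have h2 : r ≤ max r x := le_max_left _ _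
    have h3 : max r x - min r x = |x - r| := max_sub_min_eq_abs _ _
    rw [abs_le]
    constructor <;> [linarith [hs.1.le, hs.2, h2, h3.symm.le]; linarith [hs.1.le, hs.2, h1, h3.symm.le]]
  -- rewrite Phi s in closed form
  have hPhi : ((r ^ (ℓ + 1) : ℝ) : ℂ) * fA ℓ V ψ s - ((r ^ (-ℓ) : ℝ) : ℂ) * fB ℓ V ψ s
      = (((r ^ (ℓ + 1) * s ^ (-ℓ) - r ^ (-ℓ) * s ^ (ℓ + 1) : ℝ)) : ℂ) * (V s * ψ s) := by
    rw [fA, fB, Set.indicator_of_mem hmem, Set.indicator_of_mem hmem]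
    push_cast
    ring
  rw [hPhi]
  have hnorm : ‖(((r ^ (ℓ + 1) * s ^ (-ℓ) - r ^ (-ℓ) * s ^ (ℓ + 1) : ℝ)) : ℂ) * (V s * ψ s)‖
      = |r ^ (ℓ + 1) * s ^ (-ℓ) - r ^ (-ℓ) * s ^ (ℓ + 1)| * (‖V s‖ * ‖ψ s‖) := by
    rw [norm_mul, norm_mul, Complex.norm_real, Real.norm_eq_abs]
  rw [hnorm]
  -- bound the kernel difference
  have e1 : r ^ (-ℓ) * r ^ (2 * ℓ + 1) = r ^ (ℓ + 1) := by
    rw [← Real.rpow_add hr0]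
    congr 1
    ring
  have e2 : s ^ (-ℓ) * s ^ (2 * ℓ + 1) = s ^ (ℓ + 1) := by
    rw [← Real.rpow_add hs0]
    congr 1
    ring
  have hd : r ^ (ℓ + 1) * s ^ (-ℓ) - r ^ (-ℓ) * s ^ (ℓ + 1)
      = s ^ (-ℓ) * r ^ (-ℓ) * (r ^ (2 * ℓ + 1) - s ^ (2 * ℓ + 1)) := by
    calc r ^ (ℓ + 1) * s ^ (-ℓ) - r ^ (-ℓ) * s ^ (ℓ + 1)
        = s ^ (-ℓ) * (r ^ (-ℓ) * r ^ (2 * ℓ + 1)) - r ^ (-ℓ) * (s ^ (-ℓ) * s ^ (2 * ℓ + 1)) := by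
          rw [e1, e2]
          ring
      _ = s ^ (-ℓ) * r ^ (-ℓ) * (r ^ (2 * ℓ + 1) - s ^ (2 * ℓ + 1)) := by ring
  have hlip := rpow_lip hℓ (a := s) (b := r) ⟨hs0.le, hs1⟩ ⟨hr0.le, hr.2⟩
  have hdabs : |r ^ (ℓ + 1) * s ^ (-ℓ) - r ^ (-ℓ) * s ^ (ℓ + 1)|
      ≤ s ^ (-ℓ) * r ^ (-ℓ) * ((2 * ℓ + 1) * |x - r|) := by
    rw [hd, abs_mul, abs_of_nonneg (mul_nonneg (Real.rpow_nonneg hs0.le _) (Real.rpow_nonneg hr0.le _))]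
    refine mul_le_mul_of_nonneg_left ?_ (mul_nonneg (Real.rpow_nonneg hs0.le _) (Real.rpow_nonneg hr0.le _))
    refine hlip.trans ?_
    have : |r - s| = |s - r| := abs_sub_comm _ _
    rw [this]
    exact mul_le_mul_of_nonneg_left hsr (by linarith)
  -- bound ψ
  have hψb : ‖ψ s‖ ≤ C * (s ^ (ℓ + 1) * QV V 1 ^ k) := by
    refine (hP s hmem).trans ?_
    refine mul_le_mul_of_nonneg_left ?_ hC
    refine mul_le_mul_of_nonneg_left ?_ (Real.rpow_nonneg hs0.le _)
    exact pow_le_pow_left₀ (QV_nonneg hV s) (QV_le_top hV s) k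
  have hVn : (0:ℝ) ≤ ‖V s‖ := norm_nonneg _
  have hstep : |r ^ (ℓ + 1) * s ^ (-ℓ) - r ^ (-ℓ) * s ^ (ℓ + 1)| * (‖V s‖ * ‖ψ s‖)
      ≤ (s ^ (-ℓ) * r ^ (-ℓ) * ((2 * ℓ + 1) * |x - r|)) * (‖V s‖ * (C * (s ^ (ℓ + 1) * QV V 1 ^ k))) := by
    refine mul_le_mul hdabs ?_ (mul_nonneg hVn (norm_nonneg _)) ?_
    · exact mul_le_mul_of_nonneg_left hψb hVn
    · exact mul_nonneg (mul_nonneg (Real.rpow_nonneg hs0.le _) (Real.rpow_nonneg hr0.le _))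
        (mul_nonneg (by linarith) (abs_nonneg _))
  refine hstep.trans_eq ?_
  have e3 : s ^ (-ℓ) * s ^ (ℓ + 1) = s := by
    rw [← Real.rpow_add hs0]
    norm_num
  have e4 : gV V s = s * ‖V s‖ := Set.indicator_of_mem hmem _
  calc (s ^ (-ℓ) * r ^ (-ℓ) * ((2 * ℓ + 1) * |x - r|)) * (‖V s‖ * (C * (s ^ (ℓ + 1) * QV V 1 ^ k)))
      = C * QV V 1 ^ k * ((2 * ℓ + 1) * r ^ (-ℓ)) * |x - r| * ((s ^ (-ℓ) * s ^ (ℓ + 1)) * ‖V s‖) := by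
        ring
    _ = C * QV V 1 ^ k * ((2 * ℓ + 1) * r ^ (-ℓ)) * |x - r| * gV V s := by rw [e3, e4]

lemma next_hasDerivWithinAt (hℓ : 0 < ℓ) (hVmeas : Measurable V)
    (hV : IntegrableOn (fun s : ℝ => s * ‖V s‖) (Set.Ioc 0 1))
    (hψ : ContinuousOn ψ (Set.Ioc (0:ℝ) 1)) (hC : 0 ≤ C)
    (hP : ∀ s ∈ Set.Ioc (0:ℝ) 1, ‖ψ s‖ ≤ C * (s ^ (ℓ + 1) * QV V s ^ k))
    {r : ℝ} (hr : r ∈ Set.Ioc (0:ℝ) 1) :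
    HasDerivWithinAt (fun x => ∫ s in Set.Ioc (0:ℝ) x, ((besselKer ℓ x s : ℝ) : ℂ) * V s * ψ s)
      (((1 / (2 * ℓ + 1) : ℝ) : ℂ) *
        ((((ℓ + 1) * r ^ ℓ : ℝ) : ℂ) * AA ℓ V ψ r - ((-ℓ * r ^ (-ℓ - 1) : ℝ) : ℂ) * BB ℓ V ψ r))
      (Set.Icc (0:ℝ) 1) r := by
  have hr0 : (0:ℝ) < r := hr.1
  have hAcont : Continuous (AA ℓ V ψ) := AA_cont hVmeas hV hψ hC hP
  have hBcont : Continuous (BB ℓ V ψ) := BB_cont hℓ hVmeas hV hψ hC hP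
  have hfAint : Integrable (fA ℓ V ψ) := fA_int hVmeas hV hψ hC hP
  have hfBint : Integrable (fB ℓ V ψ) := fB_int hℓ hVmeas hV hψ hC hP
  set A : ℝ → ℂ := AA ℓ V ψ with hA
  set B : ℝ → ℂ := BB ℓ V ψ with hB
  set aCr : ℂ := ((r ^ (ℓ + 1) : ℝ) : ℂ) with haCr
  set bCr : ℂ := ((r ^ (-ℓ) : ℝ) : ℂ) with hbCr
  -- derivatives of the coefficient functions
  have haR : HasDerivAt (fun x : ℝ => ((x ^ (ℓ + 1) : ℝ) : ℂ)) (((ℓ + 1) * r ^ ℓ : ℝ) : ℂ) r := by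
    have h := (Real.hasDerivAt_rpow_const (x := r) (p := ℓ + 1) (Or.inl hr0.ne')).ofReal_comp
    simpa [show (ℓ + 1 - 1 : ℝ) = ℓ by ring] using h
  have hbR : HasDerivAt (fun x : ℝ => ((x ^ (-ℓ) : ℝ) : ℂ)) ((-ℓ * r ^ (-ℓ - 1) : ℝ) : ℂ) r := by
    have h := (Real.hasDerivAt_rpow_const (x := r) (p := -ℓ) (Or.inl hr0.ne')).ofReal_comp
    simpa using h
  -- continuity of A, B at r
  have hAo : Filter.Tendsto (fun x => A x - A r) (nhds r) (nhds 0) := by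
    have h := (hAcont.tendsto r).sub (tendsto_const_nhds (x := A r))
    simpa using h
  have hBo : Filter.Tendsto (fun x => B x - B r) (nhds r) (nhds 0) := by
    have h := (hBcont.tendsto r).sub (tendsto_const_nhds (x := B r))
    simpa using h
  -- second-order product terms
  have hF1b : HasDerivAt (fun x => (((x ^ (ℓ + 1) : ℝ) : ℂ) - aCr) * (A x - A r)) 0 r := by
    rw [hasDerivAt_iff_isLittleO]
    have hO : (fun x => ((x ^ (ℓ + 1) : ℝ) : ℂ) - aCr) =O[nhds r] fun x => x - r := by
      simpa using (haR.sub_const aCr).isBigO_sub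
    have ho : (fun x => A x - A r) =o[nhds r] (fun _ => (1:ℝ)) :=
      (Asymptotics.isLittleO_one_iff _).2 hAo
    have hprod := hO.mul_isLittleO ho
    have h2 : (fun x => (((x ^ (ℓ + 1) : ℝ) : ℂ) - aCr) * (A x - A r)) =o[nhds r]
        fun x => x - r := by
      simpa using hprod
    simpa using h2
  have hF2b : HasDerivAt (fun x => (((x ^ (-ℓ) : ℝ) : ℂ) - bCr) * (B x - B r)) 0 r := by
    rw [hasDerivAt_iff_isLittleO]
    have hO : (fun x => ((x ^ (-ℓ) : ℝ) : ℂ) - bCr) =O[nhds r] fun x => x - r := by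
      simpa using (hbR.sub_const bCr).isBigO_sub
    have ho : (fun x => B x - B r) =o[nhds r] (fun _ => (1:ℝ)) :=
      (Asymptotics.isLittleO_one_iff _).2 hBo
    have hprod := hO.mul_isLittleO ho
    have h2 : (fun x => (((x ^ (-ℓ) : ℝ) : ℂ) - bCr) * (B x - B r)) =o[nhds r]
        fun x => x - r := by
      simpa using hprod
    simpa using h2
  -- the frozen-coefficient term F3
  set Phi : ℝ → ℂ := fun s => aCr * fA ℓ V ψ s - bCr * fB ℓ V ψ s with hPhi
  have hPhiInt : Integrable Phi := (hfAint.const_mul _).sub (hfBint.const_mul _)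
  have hE : ∀ x : ℝ, aCr * A x - bCr * B x - (aCr * A r - bCr * B r) = ∫ t in r..x, Phi t := by
    intro x
    have e1 : A x - A r = ∫ t in r..x, fA ℓ V ψ t :=
      intervalIntegral.integral_interval_sub_left hfAint.intervalIntegrable
        hfAint.intervalIntegrable
    have e2 : B x - B r = ∫ t in r..x, fB ℓ V ψ t :=
      intervalIntegral.integral_interval_sub_left hfBint.intervalIntegrable
        hfBint.intervalIntegrable
    calc aCr * A x - bCr * B x - (aCr * A r - bCr * B r)
        = aCr * (A x - A r) - bCr * (B x - B r) := by ring
      _ = (∫ t in r..x, aCr * fA ℓ V ψ t) - ∫ t in r..x, bCr * fB ℓ V ψ t := by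
          rw [e1, e2, intervalIntegral.integral_const_mul, intervalIntegral.integral_const_mul]
      _ = ∫ t in r..x, Phi t :=
          (intervalIntegral.integral_sub ((hfAint.const_mul _).intervalIntegrable)
            ((hfBint.const_mul _).intervalIntegrable)).symm
  set K : ℝ := C * QV V 1 ^ k * ((2 * ℓ + 1) * r ^ (-ℓ)) with hK
  have hK0 : 0 ≤ K :=
    mul_nonneg (mul_nonneg hC (pow_nonneg (QV_nonneg hV 1) k))
      (mul_nonneg (by linarith) (Real.rpow_nonneg hr0.le _))
  have hEb : ∀ x ∈ Set.Icc (0:ℝ) 1, |x - r| ≤ r / 2 →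
      ‖∫ t in r..x, Phi t‖ ≤ K * |x - r| * (QV V (max r x) - QV V (min r x)) := by
    intro x hx hnear
    have h1 : ‖∫ t in r..x, Phi t‖ ≤ ∫ t in Set.uIoc r x, ‖Phi t‖ :=
      intervalIntegral.norm_integral_le_integral_norm_uIoc
    have h2 : (∫ t in Set.uIoc r x, ‖Phi t‖) ≤ ∫ t in Set.uIoc r x, (K * |x - r|) * gV V t := by
      refine setIntegral_mono_on hPhiInt.norm.integrableOn
        (((gV_int hV).integrableOn).const_mul _) measurableSet_uIoc ?_
      intro t ht
      have h3 := Phi_norm_le hℓ hV hC hP hr hx hnear ht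
      calc ‖Phi t‖ ≤ K * |x - r| * gV V t := h3
        _ = (K * |x - r|) * gV V t := by ring
    have h4 : (∫ t in Set.uIoc r x, gV V t) = QV V (max r x) - QV V (min r x) := by
      rw [Set.uIoc]
      exact (QV_sub hV min_le_max).symm
    calc ‖∫ t in r..x, Phi t‖ ≤ ∫ t in Set.uIoc r x, (K * |x - r|) * gV V t := h1.trans h2
      _ = (K * |x - r|) * (QV V (max r x) - QV V (min r x)) := by rw [integral_const_mul, h4]
      _ = K * |x - r| * (QV V (max r x) - QV V (min r x)) := by ring
  have hF3 : HasDerivWithinAt (fun x => aCr * A x - bCr * B x) 0 (Set.Icc (0:ℝ) 1) r := by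
    rw [hasDerivWithinAt_iff_isLittleO, Asymptotics.isLittleO_iff]
    intro ε hε
    have hK1 : (0:ℝ) < K + 1 := by linarith
    have hwcont : Continuous fun x => QV V (max r x) - QV V (min r x) :=
      ((QV_cont hV).comp (continuous_const.max continuous_id)).sub
        ((QV_cont hV).comp (continuous_const.min continuous_id))
    have hw : Filter.Tendsto (fun x => QV V (max r x) - QV V (min r x)) (nhds r) (nhds 0) := by
      have h2 := hwcont.tendsto r
      simpa using h2
    have hev1 : ∀ᶠ x in nhds r, |x - r| ≤ r / 2 := by
      have hball : Metric.ball r (r / 2) ∈ nhds r := Metric.ball_mem_nhds r (by linarith)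
      filter_upwards [hball] with x hx
      rw [Metric.mem_ball, Real.dist_eq] at hx
      exact hx.le
    have hev2 : ∀ᶠ x in nhds r, QV V (max r x) - QV V (min r x) < ε / (K + 1) :=
      hw.eventually_lt_const (by positivity)
    filter_upwards [hev1.filter_mono nhdsWithin_le_nhds, hev2.filter_mono nhdsWithin_le_nhds,
      self_mem_nhdsWithin] with x h1 h2 hx
    rw [smul_zero, sub_zero, hE x]
    have hb := hEb x hx h1
    have hw0 : 0 ≤ QV V (max r x) - QV V (min r x) := sub_nonneg.2 (QV_mono hV min_le_max)
    have habs0 : (0:ℝ) ≤ |x - r| := abs_nonneg _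
    calc ‖∫ t in r..x, Phi t‖ ≤ K * |x - r| * (QV V (max r x) - QV V (min r x)) := hb
      _ ≤ (K + 1) * |x - r| * (ε / (K + 1)) := by
          nlinarith [mul_nonneg habs0 hw0, mul_nonneg hK1.le (mul_nonneg habs0 hw0),
            mul_le_mul_of_nonneg_left h2.le (mul_nonneg hK1.le habs0)]
      _ = ε * |x - r| := by field_simp
      _ = ε * ‖x - r‖ := by rw [Real.norm_eq_abs]
  -- first-order terms
  have hF1a : HasDerivAt (fun x => (((x ^ (ℓ + 1) : ℝ) : ℂ) - aCr) * A r)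
      ((((ℓ + 1) * r ^ ℓ : ℝ) : ℂ) * A r) r := (haR.sub_const aCr).mul_const (A r)
  have hF2a : HasDerivAt (fun x => (((x ^ (-ℓ) : ℝ) : ℂ) - bCr) * B r)
      (((-ℓ * r ^ (-ℓ - 1) : ℝ) : ℂ) * B r) r := (hbR.sub_const bCr).mul_const (B r)
  -- assemble
  have hG : HasDerivWithinAt (fun x =>
      ((((x ^ (ℓ + 1) : ℝ) : ℂ) - aCr) * A r + (((x ^ (ℓ + 1) : ℝ) : ℂ) - aCr) * (A x - A r))
      - ((((x ^ (-ℓ) : ℝ) : ℂ) - bCr) * B r + (((x ^ (-ℓ) : ℝ) : ℂ) - bCr) * (B x - B r))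
      + (aCr * A x - bCr * B x))
      ((((((ℓ + 1) * r ^ ℓ : ℝ) : ℂ) * A r + 0)
        - (((-ℓ * r ^ (-ℓ - 1) : ℝ) : ℂ) * B r + 0)) + 0) (Set.Icc (0:ℝ) 1) r :=
    ((hF1a.hasDerivWithinAt.add hF1b.hasDerivWithinAt).sub
      (hF2a.hasDerivWithinAt.add hF2b.hasDerivWithinAt)).add hF3
  have hFder : HasDerivWithinAt (fun x => ((1 / (2 * ℓ + 1) : ℝ) : ℂ) *
      (((x ^ (ℓ + 1) : ℝ) : ℂ) * A x - ((x ^ (-ℓ) : ℝ) : ℂ) * B x))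
      (((1 / (2 * ℓ + 1) : ℝ) : ℂ) *
        ((((ℓ + 1) * r ^ ℓ : ℝ) : ℂ) * A r - ((-ℓ * r ^ (-ℓ - 1) : ℝ) : ℂ) * B r))
      (Set.Icc (0:ℝ) 1) r := by
    have hG2 := hG.const_mul (((1 / (2 * ℓ + 1) : ℝ) : ℂ))
    have heq : (fun x => ((1 / (2 * ℓ + 1) : ℝ) : ℂ) *
        (((((x ^ (ℓ + 1) : ℝ) : ℂ) - aCr) * A r + (((x ^ (ℓ + 1) : ℝ) : ℂ) - aCr) * (A x - A r))
        - ((((x ^ (-ℓ) : ℝ) : ℂ) - bCr) * B r + (((x ^ (-ℓ) : ℝ) : ℂ) - bCr) * (B x - B r))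
        + (aCr * A x - bCr * B x)))
        = fun x => ((1 / (2 * ℓ + 1) : ℝ) : ℂ) *
          (((x ^ (ℓ + 1) : ℝ) : ℂ) * A x - ((x ^ (-ℓ) : ℝ) : ℂ) * B x) := by
      funext x
      ring
    rw [heq] at hG2
    exact hG2.congr_deriv (by ring)
  refine hFder.congr (fun x hx => ?_) ?_
  · exact rep hℓ hVmeas hV hψ hC hP hx
  · exact rep hℓ hVmeas hV hψ hC hP ⟨hr0.le, hr.2⟩

lemma Dval_norm_le (hℓ : 0 < ℓ) (hVmeas : Measurable V)
    (hV : IntegrableOn (fun s : ℝ => s * ‖V s‖) (Set.Ioc 0 1)) (hC : 0 ≤ C)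
    (hP : ∀ s ∈ Set.Ioc (0:ℝ) 1, ‖ψ s‖ ≤ C * (s ^ (ℓ + 1) * QV V s ^ k))
    {r : ℝ} (hr : r ∈ Set.Ioc (0:ℝ) 1) :
    ‖((1 / (2 * ℓ + 1) : ℝ) : ℂ) *
        ((((ℓ + 1) * r ^ ℓ : ℝ) : ℂ) * AA ℓ V ψ r - ((-ℓ * r ^ (-ℓ - 1) : ℝ) : ℂ) * BB ℓ V ψ r)‖
      ≤ C / ((k:ℝ) + 1) * (r ^ ℓ * QV V r ^ (k + 1)) := by
  have hr0 : (0:ℝ) < r := hr.1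
  have h2ℓ : (0:ℝ) < 2 * ℓ + 1 := by linarith
  have hk1 : (0:ℝ) < (k:ℝ) + 1 := by positivity
  have hAn := AA_norm_le hVmeas hV hC hP hr
  have hBn := BB_norm_le hℓ hVmeas hV hC hP hr
  have h1 : ‖((1 / (2 * ℓ + 1) : ℝ) : ℂ) *
      ((((ℓ + 1) * r ^ ℓ : ℝ) : ℂ) * AA ℓ V ψ r - ((-ℓ * r ^ (-ℓ - 1) : ℝ) : ℂ) * BB ℓ V ψ r)‖
      ≤ 1 / (2 * ℓ + 1) * ((ℓ + 1) * r ^ ℓ * (C * (QV V r ^ (k + 1) / ((k:ℝ) + 1)))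
        + ℓ * r ^ (-ℓ - 1) * (C * r ^ (2 * ℓ + 1) * (QV V r ^ (k + 1) / ((k:ℝ) + 1)))) := by
    rw [norm_mul, Complex.norm_real, Real.norm_eq_abs, abs_of_nonneg (by positivity)]
    refine mul_le_mul_of_nonneg_left ?_ (by positivity)
    refine (norm_sub_le _ _).trans ?_
    rw [norm_mul, norm_mul, Complex.norm_real, Complex.norm_real, Real.norm_eq_abs,
      Real.norm_eq_abs]
    have e1 : |(ℓ + 1) * r ^ ℓ| = (ℓ + 1) * r ^ ℓ :=
      abs_of_nonneg (mul_nonneg (by linarith) (Real.rpow_nonneg hr0.le _))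
    have e2 : |(-ℓ) * r ^ (-ℓ - 1)| = ℓ * r ^ (-ℓ - 1) := by
      rw [abs_mul, abs_neg, abs_of_nonneg hℓ.le,
        abs_of_nonneg (Real.rpow_nonneg hr0.le _)]
    rw [e1, e2]
    refine add_le_add ?_ ?_
    · exact mul_le_mul_of_nonneg_left hAn (mul_nonneg (by linarith) (Real.rpow_nonneg hr0.le _))
    · exact mul_le_mul_of_nonneg_left hBn (mul_nonneg hℓ.le (Real.rpow_nonneg hr0.le _))
  refine h1.trans_eq ?_
  have e3 : r ^ (-ℓ - 1) * r ^ (2 * ℓ + 1) = r ^ ℓ := by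
    rw [← Real.rpow_add hr0]
    congr 1
    ring
  rw [show ℓ * r ^ (-ℓ - 1) * (C * r ^ (2 * ℓ + 1) * (QV V r ^ (k + 1) / ((k:ℝ) + 1)))
      = ℓ * (r ^ (-ℓ - 1) * r ^ (2 * ℓ + 1)) * (C * (QV V r ^ (k + 1) / ((k:ℝ) + 1))) by ring, e3]
  field_simp
  ring

end Step


end SppsAux

/-- The bounds `|ψ_k^ℓ(r)| ≤ (2/(2ℓ+1))^k (r^{ℓ+1}/k!) (∫₀^r s|V(s)| ds)^k` for `k ∈ ℕ₀`,
and `|(ψ_k^ℓ)'(r)| ≤ (2/(2ℓ+1))^{k−1} (r^ℓ/k!) (∫₀^r s|V(s)| ds)^k` for `k ≥ 1`,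
on `(0,1]`. -/
theorem sppsPsi_bounds (ℓ : ℝ) (hℓ : 0 < ℓ) (V : ℝ → ℂ) (hVmeas : Measurable V)
    (hV : IntegrableOn (fun s : ℝ => s * ‖V s‖) (Set.Ioc 0 1)) :
    (∀ k : ℕ, ∀ r ∈ Set.Ioc (0 : ℝ) 1,
      ‖sppsPsi ℓ V k r‖ ≤ (2 / (2 * ℓ + 1)) ^ k * (r ^ (ℓ + 1) / (k.factorial : ℝ))
        * (∫ s in Set.Ioc (0 : ℝ) r, s * ‖V s‖) ^ k) ∧
    (∀ k : ℕ, 1 ≤ k → ∀ r ∈ Set.Ioc (0 : ℝ) 1,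
      DifferentiableWithinAt ℝ (sppsPsi ℓ V k) (Set.Icc 0 1) r ∧
      ‖derivWithin (sppsPsi ℓ V k) (Set.Icc 0 1) r‖
        ≤ (2 / (2 * ℓ + 1)) ^ (k - 1) * (r ^ ℓ / (k.factorial : ℝ))
          * (∫ s in Set.Ioc (0 : ℝ) r, s * ‖V s‖) ^ k) := by
  constructor
  · intro k r hr
    have h := (SppsAux.pack hℓ hVmeas hV k).2 r hr
    rw [← SppsAux.QV_eq hV hr.1.le hr.2]
    refine h.trans_eq ?_
    ring
  · intro k hk r hr
    obtain ⟨m, rfl⟩ : ∃ m, k = m + 1 := ⟨k - 1, (Nat.succ_pred_eq_of_pos hk).symm⟩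
    have hC : (0:ℝ) ≤ (2 / (2 * ℓ + 1)) ^ m / (m.factorial : ℝ) := by positivity
    have hcont := (SppsAux.pack hℓ hVmeas hV m).1
    have hP := (SppsAux.pack hℓ hVmeas hV m).2
    have hD := SppsAux.next_hasDerivWithinAt hℓ hVmeas hV hcont hC hP hr
    have hDf : HasDerivWithinAt (sppsPsi ℓ V (m + 1))
        (((1 / (2 * ℓ + 1) : ℝ) : ℂ) *
          ((((ℓ + 1) * r ^ ℓ : ℝ) : ℂ) * SppsAux.AA ℓ V (sppsPsi ℓ V m) r
            - ((-ℓ * r ^ (-ℓ - 1) : ℝ) : ℂ) * SppsAux.BB ℓ V (sppsPsi ℓ V m) r))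
        (Set.Icc (0:ℝ) 1) r := hD
    refine ⟨hDf.differentiableWithinAt, ?_⟩
    rw [hDf.derivWithin ((uniqueDiffOn_Icc zero_lt_one) r ⟨hr.1.le, hr.2⟩)]
    have hb := SppsAux.Dval_norm_le hℓ hVmeas hV hC hP hr
    rw [← SppsAux.QV_eq hV hr.1.le hr.2]
    refine hb.trans_eq ?_
    simp only [Nat.add_sub_cancel]
    have hfact : (((m + 1).factorial : ℕ) : ℝ) = ((m:ℝ) + 1) * (m.factorial : ℝ) := by
      rw [Nat.factorial_succ]
      push_cast
      ring
    have hmf : (0:ℝ) < (m.factorial : ℝ) := by exact_mod_cast m.factorial_pos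
    have hm1 : (0:ℝ) < (m:ℝ) + 1 := by positivity
    rw [hfact]
    field_simp
end

section
/- For every m ∈ ℕ₀ and every r ∈ (0,1] one has the uniform bound |α_m(r)| ≤ e^{2∫₀¹ s|V(s)| ds}. -/
open Real Set MeasureTheory Filter

/-- `ℓ_m = m + (d−3)/2`. -/
noncomputable def ellm (d m : ℕ) : ℝ := (m : ℝ) + ((d : ℝ) - 3) / 2

/-- `α_m(r) = y_m(r)/r^{ℓ_m+1}` where `y_m = w_{ℓ_m}`. -/
noncomputable def alphaFun (d : ℕ) (V : ℝ → ℂ) (m : ℕ) (r : ℝ) : ℂ :=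
  sppsW (ellm d m) V r / ((r ^ (ellm d m + 1) : ℝ) : ℂ)

namespace AlphaAux

noncomputable def F (g : ℝ → ℝ) (x : ℝ) : ℝ := ∫ s in Set.Ioc (0:ℝ) x, g s

variable {g : ℝ → ℝ}

lemma pow_ineq : ∀ (k : ℕ) (x : ℝ), 0 ≤ x →
    ((k:ℝ)+1) * x ^ k ≤ (x+1)^(k+1) - x^(k+1) := by
  intro k
  induction k with
  | zero => intro x hx; norm_num
  | succ k ih =>
    intro x hx
    have h := ih x hx
    have h1 : (0:ℝ) ≤ x ^ k := pow_nonneg hx k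
    have h2 : (0:ℝ) ≤ x ^ (k+1) := pow_nonneg hx (k+1)
    have e1 : (x+1)^(k+2) = (x+1) * (x+1)^(k+1) := by ring
    have e2 : x^(k+2) = x * x^(k+1) := by ring
    have e3 : x^(k+1) = x * x^k := by ring
    push_cast
    nlinarith [mul_le_mul_of_nonneg_left h (by linarith : (0:ℝ) ≤ x + 1)]

lemma sum_pow_le (k N : ℕ) :
    ∑ j ∈ Finset.range N, ((j:ℝ)+1)^k ≤ ((N:ℝ)+1)^(k+1) / ((k:ℝ)+1) := by
  rw [le_div_iff₀ (by positivity : (0:ℝ) < (k:ℝ)+1)]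
  have tele : ∑ j ∈ Finset.range N, (((j:ℝ)+1+1)^(k+1) - ((j:ℝ)+1)^(k+1))
      = ((N:ℝ)+1)^(k+1) - ((0:ℝ)+1)^(k+1) := by
    have := Finset.sum_range_sub (fun j => ((j:ℝ)+1)^(k+1)) N
    simpa [add_assoc] using this
  calc (∑ j ∈ Finset.range N, ((j:ℝ)+1)^k) * ((k:ℝ)+1)
      = ∑ j ∈ Finset.range N, ((k:ℝ)+1) * ((j:ℝ)+1)^k := by
        rw [Finset.sum_mul]; exact Finset.sum_congr rfl fun j _ => by ring
    _ ≤ ∑ j ∈ Finset.range N, (((j:ℝ)+1+1)^(k+1) - ((j:ℝ)+1)^(k+1)) := by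
        refine Finset.sum_le_sum fun j _ => ?_
        exact pow_ineq k ((j:ℝ)+1) (by positivity)
    _ = ((N:ℝ)+1)^(k+1) - 1 := by rw [tele]; norm_num
    _ ≤ ((N:ℝ)+1)^(k+1) := by linarith


lemma F_zero : F g 0 = 0 := by simp [F]

lemma F_cont (hg : IntegrableOn g (Set.Icc 0 1)) : ContinuousOn (F g) (Set.Icc 0 1) :=
  intervalIntegral.continuousOn_primitive hg

lemma F_incr (hg : IntegrableOn g (Set.Icc 0 1)) {a b : ℝ} (h0 : 0 ≤ a) (hab : a ≤ b)
    (hb1 : b ≤ 1) : ∫ s in Set.Ioc a b, g s = F g b - F g a := by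
  have hsub1 : Set.Ioc (0:ℝ) a ⊆ Set.Icc 0 1 := fun x hx => ⟨hx.1.le, hx.2.trans (hab.trans hb1)⟩
  have hsub2 : Set.Ioc a b ⊆ Set.Icc 0 1 := fun x hx => ⟨h0.trans hx.1.le, hx.2.trans hb1⟩
  have hu : Set.Ioc (0:ℝ) a ∪ Set.Ioc a b = Set.Ioc 0 b := Set.Ioc_union_Ioc_eq_Ioc h0 hab
  have : F g b = F g a + ∫ s in Set.Ioc a b, g s := by
    rw [F, F, ← hu, setIntegral_union (Set.Ioc_disjoint_Ioc_of_le le_rfl) measurableSet_Ioc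
      (hg.mono_set hsub1) (hg.mono_set hsub2)]
  linarith

lemma F_nonneg (hg : IntegrableOn g (Set.Icc 0 1)) (hg0 : ∀ s ∈ Set.Ioc (0:ℝ) 1, 0 ≤ g s)
    {b : ℝ} (hb1 : b ≤ 1) : 0 ≤ F g b := by
  refine setIntegral_nonneg measurableSet_Ioc fun x hx => hg0 x ⟨hx.1, hx.2.trans hb1⟩

lemma F_mono (hg : IntegrableOn g (Set.Icc 0 1)) (hg0 : ∀ s ∈ Set.Ioc (0:ℝ) 1, 0 ≤ g s)
    {a b : ℝ} (h0 : 0 ≤ a) (hab : a ≤ b) (hb1 : b ≤ 1) : F g a ≤ F g b := by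
  have h := F_incr hg h0 hab hb1
  have h2 : 0 ≤ ∫ s in Set.Ioc a b, g s :=
    setIntegral_nonneg measurableSet_Ioc fun x hx => hg0 x ⟨h0.trans_lt hx.1, hx.2.trans hb1⟩
  linarith

lemma intOn (hg : IntegrableOn g (Set.Icc 0 1)) (hg0 : ∀ s ∈ Set.Ioc (0:ℝ) 1, 0 ≤ g s)
    (k : ℕ) {a b : ℝ} (h0 : 0 ≤ a) (hb1 : b ≤ 1) :
    IntegrableOn (fun s => g s * F g s ^ k) (Set.Ioc a b) := by
  rcases le_or_gt a b with hab | hab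
  · have hsub : Set.Ioc a b ⊆ Set.Icc 0 1 := fun x hx => ⟨h0.trans hx.1.le, hx.2.trans hb1⟩
    have hFm : AEStronglyMeasurable (fun s => F g s ^ k) (volume.restrict (Set.Ioc a b)) := by
      have h1 : AEStronglyMeasurable (F g) (volume.restrict (Set.Icc (0:ℝ) 1)) :=
        (F_cont hg).aestronglyMeasurable measurableSet_Icc
      exact (h1.mono_measure (Measure.restrict_mono hsub le_rfl)).pow k
    have hbd : ∀ᵐ s ∂(volume.restrict (Set.Ioc a b)), ‖F g s ^ k‖ ≤ F g 1 ^ k := by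
      refine (ae_restrict_iff' measurableSet_Ioc).2 (Eventually.of_forall fun s hs => ?_)
      have h1 : 0 ≤ F g s := F_nonneg hg hg0 ((hsub hs).2)
      have h2 : F g s ≤ F g 1 := F_mono hg hg0 (hsub hs).1 (hsub hs).2 le_rfl
      rw [Real.norm_eq_abs, abs_of_nonneg (pow_nonneg h1 k)]
      exact pow_le_pow_left₀ h1 h2 k
    have := Integrable.bdd_mul (c := F g 1 ^ k) (hg.mono_set hsub) hFm hbd
    exact this.congr (Eventually.of_forall fun s => mul_comm _ _)
  · rw [Set.Ioc_eq_empty (not_lt.mpr hab.le)]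
    simp [IntegrableOn]

end AlphaAux

namespace AlphaAux2
open AlphaAux
variable {g : ℝ → ℝ}

lemma J_incr (hg : IntegrableOn g (Set.Icc 0 1)) (hg0 : ∀ s ∈ Set.Ioc (0:ℝ) 1, 0 ≤ g s)
    (k : ℕ) {a b : ℝ} (h0 : 0 ≤ a) (hab : a ≤ b) (hb1 : b ≤ 1) :
    (∫ s in Set.Ioc (0:ℝ) b, g s * F g s ^ k) - (∫ s in Set.Ioc (0:ℝ) a, g s * F g s ^ k)
      ≤ F g b ^ k * (F g b - F g a) := by
  have hsub : Set.Ioc a b ⊆ Set.Icc 0 1 := fun x hx => ⟨h0.trans hx.1.le, hx.2.trans hb1⟩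
  have hsplit : (∫ s in Set.Ioc (0:ℝ) b, g s * F g s ^ k)
      = (∫ s in Set.Ioc (0:ℝ) a, g s * F g s ^ k) + ∫ s in Set.Ioc a b, g s * F g s ^ k := by
    rw [← Set.Ioc_union_Ioc_eq_Ioc h0 hab,
      setIntegral_union (Set.Ioc_disjoint_Ioc_of_le le_rfl) measurableSet_Ioc
        (intOn hg hg0 k le_rfl (hab.trans hb1)) (intOn hg hg0 k h0 hb1)]
  have hle : ∫ s in Set.Ioc a b, g s * F g s ^ k ≤ ∫ s in Set.Ioc a b, F g b ^ k * g s := by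
    refine setIntegral_mono_on (intOn hg hg0 k h0 hb1)
      ((hg.mono_set hsub).const_mul _) measurableSet_Ioc fun s hs => ?_
    have hgs := hg0 s ⟨h0.trans_lt hs.1, hs.2.trans hb1⟩
    have hFs0 : 0 ≤ F g s := F_nonneg hg hg0 (hs.2.trans hb1)
    have hFsb : F g s ≤ F g b := F_mono hg hg0 (h0.trans hs.1.le) hs.2 hb1
    calc g s * F g s ^ k ≤ g s * F g b ^ k :=
          mul_le_mul_of_nonneg_left (pow_le_pow_left₀ hFs0 hFsb k) hgs
      _ = F g b ^ k * g s := mul_comm _ _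
  have heq : ∫ s in Set.Ioc a b, F g b ^ k * g s = F g b ^ k * (F g b - F g a) := by
    rw [integral_const_mul, F_incr hg h0 hab hb1]
  linarith

lemma key (hg : IntegrableOn g (Set.Icc 0 1)) (hg0 : ∀ s ∈ Set.Ioc (0:ℝ) 1, 0 ≤ g s)
    (k : ℕ) {r : ℝ} (hr0 : 0 ≤ r) (hr1 : r ≤ 1) :
    ∫ s in Set.Ioc (0:ℝ) r, g s * F g s ^ k ≤ F g r ^ (k+1) / ((k:ℝ)+1) := by
  have hFc : ContinuousOn (F g) (Set.Icc 0 1) := F_cont hg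
  set v : ℝ := F g r with hv
  have hv0 : 0 ≤ v := F_nonneg hg hg0 hr1
  set J : ℝ → ℝ := fun x => ∫ s in Set.Ioc (0:ℝ) x, g s * F g s ^ k with hJdef
  have main : ∀ N : ℕ, 0 < N →
      J r ≤ (v/N)^(k+1) * ((N:ℝ)+1)^(k+1) / ((k:ℝ)+1) := by
    intro N hN
    set c : ℝ := v / N with hc
    have hc0 : 0 ≤ c := div_nonneg hv0 (Nat.cast_nonneg N)
    have hNne : (N:ℝ) ≠ 0 := Nat.cast_ne_zero.2 hN.ne'
    have hNc : (N:ℝ) * c = v := by rw [hc]; field_simp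
    set S : ℕ → Set ℝ := fun j => {x ∈ Set.Icc 0 r | F g x = ((min j N : ℕ):ℝ) * c} with hS
    have hconr : ContinuousOn (F g) (Set.Icc 0 r) := hFc.mono (Set.Icc_subset_Icc le_rfl hr1)
    have hSne : ∀ j, (S j).Nonempty := by
      intro j
      have hval : ((min j N : ℕ):ℝ) * c ∈ Set.Icc (F g 0) (F g r) := by
        rw [F_zero]
        constructor
        · positivity
        · have hmm : ((min j N : ℕ):ℝ) ≤ (N:ℝ) := by exact_mod_cast Nat.min_le_right j N
          calc ((min j N : ℕ):ℝ) * c ≤ (N:ℝ) * c := mul_le_mul_of_nonneg_right hmm hc0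
            _ = v := hNc
            _ = F g r := hv
      obtain ⟨x, hx, hfx⟩ := intermediate_value_Icc hr0 hconr hval
      exact ⟨x, hx, hfx⟩
    have hScl : ∀ j, IsClosed (S j) := fun j =>
      hconr.preimage_isClosed_of_isClosed isClosed_Icc (isClosed_singleton (x := ((min j N : ℕ):ℝ) * c))
    have hSbdd : ∀ j, BddBelow (S j) := fun j => (bddBelow_Icc : BddBelow (Set.Icc (0:ℝ) r)).mono fun x hx => hx.1
    set t : ℕ → ℝ := fun j => sInf (S j) with ht
    have htmem : ∀ j, t j ∈ S j := fun j => (hScl j).csInf_mem (hSne j) (hSbdd j)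
    have htmono : ∀ j, t j ≤ t (j+1) := by
      intro j
      refine le_csInf (hSne (j+1)) fun x' hx' => ?_
      have hconx' : ContinuousOn (F g) (Set.Icc 0 x') :=
        hFc.mono (Set.Icc_subset_Icc le_rfl (hx'.1.2.trans hr1))
      have hval : ((min j N : ℕ):ℝ) * c ∈ Set.Icc (F g 0) (F g x') := by
        rw [F_zero, hx'.2]
        constructor
        · positivity
        · have hmm : ((min j N : ℕ):ℝ) ≤ ((min (j+1) N : ℕ):ℝ) := by
            exact_mod_cast min_le_min (Nat.le_succ j) (le_refl N)
          exact mul_le_mul_of_nonneg_right hmm hc0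
      obtain ⟨x, hx, hfx⟩ := intermediate_value_Icc hx'.1.1 hconx' hval
      calc t j ≤ x := csInf_le (hSbdd j) ⟨⟨hx.1, hx.2.trans hx'.1.2⟩, hfx⟩
        _ ≤ x' := hx.2
    have ht0 : t 0 = 0 := by
      have h0mem : (0:ℝ) ∈ S 0 := ⟨⟨le_rfl, hr0⟩, by simp [F_zero]⟩
      exact le_antisymm (csInf_le (hSbdd 0) h0mem) (htmem 0).1.1
    have tele : ∑ j ∈ Finset.range N, (J (t (j+1)) - J (t j)) = J (t N) - J (t 0) :=
      Finset.sum_range_sub (fun j => J (t j)) N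
    have hJt0 : J (t 0) = 0 := by rw [ht0]; simp [hJdef]
    have hstep : ∀ j ∈ Finset.range N, J (t (j+1)) - J (t j) ≤ ((j:ℝ)+1)^k * c^(k+1) := by
      intro j hj
      have hjN : j + 1 ≤ N := Finset.mem_range.mp hj
      have h1 := J_incr hg hg0 k (htmem j).1.1 (htmono j) ((htmem (j+1)).1.2.trans hr1)
      have e1 : F g (t (j+1)) = ((j:ℝ)+1) * c := by
        have h := (htmem (j+1)).2
        rw [min_eq_left hjN] at h
        rw [h]; push_cast; ring
      have e2 : F g (t j) = (j:ℝ) * c := by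
        have h := (htmem j).2
        rw [min_eq_left (Nat.le_of_lt (Finset.mem_range.mp hj))] at h
        exact h
      rw [e1, e2] at h1
      calc J (t (j+1)) - J (t j) ≤ (((j:ℝ)+1)*c)^k * (((j:ℝ)+1)*c - (j:ℝ)*c) := h1
        _ = ((j:ℝ)+1)^k * c^(k+1) := by rw [mul_pow]; ring
    have hlast : J r - J (t N) ≤ 0 := by
      have h1 := J_incr hg hg0 k (htmem N).1.1 (htmem N).1.2 hr1
      have e : F g (t N) = F g r := by
        calc F g (t N) = ((min N N : ℕ):ℝ) * c := (htmem N).2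
          _ = (N:ℝ) * c := by rw [min_self]
          _ = v := hNc
          _ = F g r := hv
      rw [e] at h1
      simpa using h1
    have hsum := Finset.sum_le_sum hstep
    rw [tele] at hsum
    calc J r ≤ ∑ j ∈ Finset.range N, ((j:ℝ)+1)^k * c^(k+1) := by linarith
      _ = (∑ j ∈ Finset.range N, ((j:ℝ)+1)^k) * c^(k+1) := by rw [Finset.sum_mul]
      _ ≤ (((N:ℝ)+1)^(k+1) / ((k:ℝ)+1)) * c^(k+1) :=
          mul_le_mul_of_nonneg_right (sum_pow_le k N) (pow_nonneg hc0 _)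
      _ = (v/N)^(k+1) * ((N:ℝ)+1)^(k+1) / ((k:ℝ)+1) := by rw [hc]; ring
  have h1 : Tendsto (fun N : ℕ => 1 + 1/(N:ℝ)) atTop (nhds 1) := by
    simpa using (tendsto_const_nhds (x := (1:ℝ))).add tendsto_one_div_atTop_nhds_zero_nat
  have h2 : Tendsto (fun N : ℕ => v * (1 + 1/(N:ℝ))) atTop (nhds v) := by
    simpa using h1.const_mul v
  have h3 := (h2.pow (k+1)).div_const ((k:ℝ)+1)
  have hlim : Tendsto (fun N : ℕ => (v/N)^(k+1) * ((N:ℝ)+1)^(k+1) / ((k:ℝ)+1)) atTop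
      (nhds (v^(k+1) / ((k:ℝ)+1))) := by
    refine h3.congr' (Filter.eventually_atTop.2 ⟨1, fun N hN => ?_⟩)
    have hN0 : (N:ℝ) ≠ 0 := Nat.cast_ne_zero.2 (by omega)
    have e : v * (1 + 1/(N:ℝ)) = (v/N) * ((N:ℝ)+1) := by field_simp
    rw [e, mul_pow]
  exact ge_of_tendsto hlim (Filter.eventually_atTop.2 ⟨1, fun N hN => main N (by omega)⟩)

end AlphaAux2

namespace AlphaAux3
open AlphaAux AlphaAux2

lemma besselKer_bound {ℓ r s : ℝ} (hℓ : 0 ≤ ℓ) (hs : 0 < s) (hsr : s ≤ r) :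
    |besselKer ℓ r s| ≤ s * (r ^ (ℓ+1) / s ^ (ℓ+1)) := by
  have hr : 0 < r := hs.trans_le hsr
  have hBA : s ^ (ℓ+1) / r ^ ℓ ≤ r ^ (ℓ+1) / s ^ ℓ := by
    rw [div_le_div_iff₀ (Real.rpow_pos_of_pos hr _) (Real.rpow_pos_of_pos hs _)]
    calc s ^ (ℓ+1) * s ^ ℓ = s ^ (ℓ+1+ℓ) := (Real.rpow_add hs _ _).symm
      _ ≤ r ^ (ℓ+1+ℓ) := Real.rpow_le_rpow hs.le hsr (by linarith)
      _ = r ^ (ℓ+1) * r ^ ℓ := Real.rpow_add hr _ _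
  have h2l : (1:ℝ) ≤ 2*ℓ+1 := by linarith
  have hker0 : 0 ≤ besselKer ℓ r s := by
    unfold besselKer
    apply mul_nonneg (by positivity) (by linarith)
  rw [abs_of_nonneg hker0]
  unfold besselKer
  have hBpos : (0:ℝ) ≤ s^(ℓ+1)/r^ℓ :=
    le_of_lt (div_pos (Real.rpow_pos_of_pos hs _) (Real.rpow_pos_of_pos hr _))
  have h1 : (1/(2*ℓ+1)) ≤ 1 := by rw [div_le_one (by linarith)]; linarith
  have step1 : (1/(2*ℓ+1)) * (r ^ (ℓ+1)/s^ℓ - s^(ℓ+1)/r^ℓ) ≤ r^(ℓ+1)/s^ℓ := by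
    calc (1/(2*ℓ+1)) * (r^(ℓ+1)/s^ℓ - s^(ℓ+1)/r^ℓ)
        ≤ 1 * (r^(ℓ+1)/s^ℓ - s^(ℓ+1)/r^ℓ) := mul_le_mul_of_nonneg_right h1 (by linarith)
      _ ≤ r^(ℓ+1)/s^ℓ := by linarith
  refine step1.trans (le_of_eq ?_)
  rw [Real.rpow_add_one hs.ne' ℓ]
  have hsl : s ^ ℓ ≠ 0 := (Real.rpow_pos_of_pos hs ℓ).ne'
  field_simp

lemma psi_bound {ℓ : ℝ} (hℓ : 0 ≤ ℓ) (V : ℝ → ℂ) (hVmeas : Measurable V)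
    (hg : IntegrableOn (fun s : ℝ => s * ‖V s‖) (Set.Icc 0 1)) (k : ℕ) :
    ∀ r ∈ Set.Ioc (0:ℝ) 1,
      ‖sppsPsi ℓ V k r‖ ≤ r ^ (ℓ+1) * F (fun s => s * ‖V s‖) r ^ k / (Nat.factorial k : ℝ) := by
  set g : ℝ → ℝ := fun s => s * ‖V s‖ with hgdef
  have hg0 : ∀ s ∈ Set.Ioc (0:ℝ) 1, 0 ≤ g s := fun s hs => mul_nonneg hs.1.le (norm_nonneg _)
  induction k with
  | zero =>
    intro r hr
    show ‖((r ^ (ℓ+1) : ℝ) : ℂ)‖ ≤ _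
    rw [Complex.norm_real, Real.norm_eq_abs, abs_of_nonneg (Real.rpow_nonneg hr.1.le _)]
    simp [Nat.factorial]
  | succ k ih =>
    intro r hr
    have hr0 := hr.1
    have hr1 := hr.2
    have hIoc1 : Set.Ioc (0:ℝ) r ⊆ Set.Ioc 0 1 := Set.Ioc_subset_Ioc le_rfl hr1
    have hint : IntegrableOn (fun s => g s * F g s ^ k) (Set.Ioc 0 r) := intOn hg hg0 k le_rfl hr1
    have hintc : Integrable (fun s => (r ^ (ℓ+1) / (Nat.factorial k : ℝ)) * (g s * F g s ^ k))
        (volume.restrict (Set.Ioc 0 r)) := hint.const_mul _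
    have hbound : ∀ᵐ s ∂(volume.restrict (Set.Ioc 0 r)),
        ‖((besselKer ℓ r s : ℝ) : ℂ) * V s * sppsPsi ℓ V k s‖
          ≤ (r ^ (ℓ+1) / (Nat.factorial k : ℝ)) * (g s * F g s ^ k) := by
      refine (ae_restrict_iff' measurableSet_Ioc).2 (Eventually.of_forall fun s hs => ?_)
      have hs0 : 0 < s := hs.1
      have hsr : s ≤ r := hs.2
      have hs1 : s ∈ Set.Ioc (0:ℝ) 1 := hIoc1 hs
      have hpsik := ih s hs1
      have hL := besselKer_bound hℓ hs0 hsr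
      have hsp : (0:ℝ) < s ^ (ℓ+1) := Real.rpow_pos_of_pos hs0 _
      have hF0 : 0 ≤ F g s := F_nonneg hg hg0 hs1.2
      calc ‖((besselKer ℓ r s : ℝ) : ℂ) * V s * sppsPsi ℓ V k s‖
          = |besselKer ℓ r s| * ‖V s‖ * ‖sppsPsi ℓ V k s‖ := by
            rw [norm_mul, norm_mul, Complex.norm_real, Real.norm_eq_abs]
        _ ≤ (s * (r ^ (ℓ+1) / s ^ (ℓ+1))) * ‖V s‖ *
              (s ^ (ℓ+1) * F g s ^ k / (Nat.factorial k : ℝ)) := by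
            have hnn : 0 ≤ s * (r ^ (ℓ+1) / s ^ (ℓ+1)) := by positivity
            exact mul_le_mul (mul_le_mul_of_nonneg_right hL (norm_nonneg _)) hpsik
              (norm_nonneg _) (mul_nonneg hnn (norm_nonneg _))
        _ = (r ^ (ℓ+1) / (Nat.factorial k : ℝ)) * (g s * F g s ^ k) := by
            rw [hgdef]
            have hfk : (Nat.factorial k : ℝ) ≠ 0 := Nat.cast_ne_zero.2 (Nat.factorial_ne_zero k)
            field_simp
    calc ‖sppsPsi ℓ V (k+1) r‖
        ≤ ∫ s in Set.Ioc (0:ℝ) r, (r ^ (ℓ+1) / (Nat.factorial k : ℝ)) * (g s * F g s ^ k) := by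
          exact norm_integral_le_of_norm_le hintc hbound
      _ = (r ^ (ℓ+1) / (Nat.factorial k : ℝ)) * ∫ s in Set.Ioc (0:ℝ) r, g s * F g s ^ k :=
          integral_const_mul _ _
      _ ≤ (r ^ (ℓ+1) / (Nat.factorial k : ℝ)) * (F g r ^ (k+1) / ((k:ℝ)+1)) :=
          mul_le_mul_of_nonneg_left (key hg hg0 k hr0.le hr1) (by positivity)
      _ = r ^ (ℓ+1) * F g r ^ (k+1) / (Nat.factorial (k+1) : ℝ) := by
          rw [Nat.factorial_succ]
          push_cast
          rw [div_mul_div_comm]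
          ring

end AlphaAux3

open AlphaAux AlphaAux2 AlphaAux3

/-- The uniform bound `|α_m(r)| ≤ exp(2∫₀¹ s|V(s)| ds)` for all `m ∈ ℕ₀` and
`r ∈ (0,1]`. -/
theorem alphaFun_bound (d : ℕ) (hd : 3 ≤ d) (V : ℝ → ℂ) (hVmeas : Measurable V)
    (hV : IntegrableOn (fun s : ℝ => s * ‖V s‖) (Set.Ioc 0 1)) :
    ∀ m : ℕ, ∀ r ∈ Set.Ioc (0 : ℝ) 1,
      ‖alphaFun d V m r‖ ≤ Real.exp (2 * ∫ s in Set.Ioc (0 : ℝ) 1, s * ‖V s‖) := by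
  intro m r hr
  have hℓ : 0 ≤ ellm d m := by
    have h3 : (3:ℝ) ≤ (d:ℝ) := by exact_mod_cast hd
    have hm : (0:ℝ) ≤ (m:ℝ) := Nat.cast_nonneg m
    unfold ellm; linarith
  set ℓ : ℝ := ellm d m
  set g : ℝ → ℝ := fun s => s * ‖V s‖ with hgdef
  have hg : IntegrableOn g (Set.Icc 0 1) := by
    rw [integrableOn_Icc_iff_integrableOn_Ioc]; exact hV
  have hg0 : ∀ s ∈ Set.Ioc (0:ℝ) 1, 0 ≤ g s := fun s hs => mul_nonneg hs.1.le (norm_nonneg _)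
  have hr0 := hr.1
  have hrp : (0:ℝ) < r ^ (ℓ+1) := Real.rpow_pos_of_pos hr0 _
  have hsum2 : Summable (fun k : ℕ => r ^ (ℓ+1) * (F g r ^ k / (Nat.factorial k : ℝ))) :=
    (Real.summable_pow_div_factorial (F g r)).mul_left _
  have hble : ∀ k, ‖sppsPsi ℓ V k r‖ ≤ r ^ (ℓ+1) * (F g r ^ k / (Nat.factorial k : ℝ)) := by
    intro k
    have := psi_bound hℓ V hVmeas hg k r hr
    rwa [mul_div_assoc] at this
  have hsum1 : Summable (fun k : ℕ => ‖sppsPsi ℓ V k r‖) :=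
    Summable.of_nonneg_of_le (fun k => norm_nonneg _) hble hsum2
  have hW : ‖sppsW ℓ V r‖ ≤ r ^ (ℓ+1) * Real.exp (F g r) := by
    have hexp : Real.exp (F g r) = ∑' k : ℕ, (F g r ^ k / (Nat.factorial k : ℝ)) := by
      rw [Real.exp_eq_exp_ℝ, NormedSpace.exp_eq_tsum_div]
    calc ‖sppsW ℓ V r‖ ≤ ∑' k, ‖sppsPsi ℓ V k r‖ := norm_tsum_le_tsum_norm hsum1
      _ ≤ ∑' k, r ^ (ℓ+1) * (F g r ^ k / (Nat.factorial k : ℝ)) := Summable.tsum_le_tsum hble hsum1 hsum2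
      _ = r ^ (ℓ+1) * ∑' k, (F g r ^ k / (Nat.factorial k : ℝ)) := tsum_mul_left
      _ = r ^ (ℓ+1) * Real.exp (F g r) := by rw [hexp]
  have halpha : ‖alphaFun d V m r‖ = ‖sppsW ℓ V r‖ / (r ^ (ℓ+1)) := by
    rw [alphaFun, norm_div, Complex.norm_real, Real.norm_eq_abs,
      abs_of_nonneg (Real.rpow_nonneg hr0.le _)]
  rw [halpha, div_le_iff₀ hrp]
  have hFle : F g r ≤ ∫ s in Set.Ioc (0:ℝ) 1, s * ‖V s‖ := by
    have h := F_mono hg hg0 hr0.le hr.2 le_rfl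
    simpa [F, hgdef] using h
  have hInt0 : 0 ≤ ∫ s in Set.Ioc (0:ℝ) 1, s * ‖V s‖ :=
    setIntegral_nonneg measurableSet_Ioc fun s hs => mul_nonneg hs.1.le (norm_nonneg _)
  calc ‖sppsW ℓ V r‖ ≤ r ^ (ℓ+1) * Real.exp (F g r) := hW
    _ ≤ r ^ (ℓ+1) * Real.exp (2 * ∫ s in Set.Ioc (0:ℝ) 1, s * ‖V s‖) := by
        refine mul_le_mul_of_nonneg_left ?_ hrp.le
        exact Real.exp_le_exp.2 (by linarith)
    _ = Real.exp (2 * ∫ s in Set.Ioc (0:ℝ) 1, s * ‖V s‖) * r ^ (ℓ+1) := mul_comm _ _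
end

section
/- There exist constants C₁ > 0 and C₂ > 0, depending only on d and ∫₀¹ s|V(s)| ds, such that |α_m'(r)| ≤ m C₁ / r for all r ∈ (0,1] and all integers m ≥ 1, and |α₀'(r)| ≤ C₂ / r for all r ∈ (0,1]. -/
open Real Set MeasureTheory Filter

noncomputable def Qf (V : ℝ → ℂ) (r : ℝ) : ℝ := ∫ s in Set.Ioc (0:ℝ) r, s * ‖V s‖

section basic
variable {V : ℝ → ℂ}

-- generic splitting of a primitive
lemma primdiff {E : Type*} [NormedAddCommGroup E] [NormedSpace ℝ E]
    {f : ℝ → E} (hf : IntegrableOn f (Set.Ioc 0 1)) {x y : ℝ}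
    (h0 : 0 ≤ x) (hxy : x ≤ y) (hy : y ≤ 1) :
    ∫ s in Set.Ioc (0:ℝ) y, f s = (∫ s in Set.Ioc (0:ℝ) x, f s) + ∫ s in Set.Ioc x y, f s := by
  rw [← Set.Ioc_union_Ioc_eq_Ioc h0 hxy, MeasureTheory.setIntegral_union (Set.Ioc_disjoint_Ioc_of_le le_rfl)
    measurableSet_Ioc (hf.mono_set (Set.Ioc_subset_Ioc le_rfl (hxy.trans hy)))
    (hf.mono_set (Set.Ioc_subset_Ioc h0 hy))]

end basic
section Qlem
variable {V : ℝ → ℂ} (hV : IntegrableOn (fun s : ℝ => s * ‖V s‖) (Set.Ioc 0 1))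

lemma Qf_zero : Qf V 0 = 0 := by simp [Qf]

include hV in
lemma Qf_sub {x y : ℝ} (h0 : 0 ≤ x) (hxy : x ≤ y) (hy : y ≤ 1) :
    Qf V y - Qf V x = ∫ s in Set.Ioc x y, s * ‖V s‖ := by
  rw [Qf, Qf, primdiff hV h0 hxy hy]; ring

lemma Qint_nonneg {x y : ℝ} (h0 : 0 ≤ x) :
    0 ≤ ∫ s in Set.Ioc x y, s * ‖V s‖ := by
  apply MeasureTheory.setIntegral_nonneg measurableSet_Ioc
  intro s hs
  exact mul_nonneg (h0.trans hs.1.le) (norm_nonneg _)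

include hV in
lemma Qf_mono {x y : ℝ} (h0 : 0 ≤ x) (hxy : x ≤ y) (hy : y ≤ 1) : Qf V x ≤ Qf V y := by
  have := Qf_sub hV h0 hxy hy
  have h2 := Qint_nonneg (V := V) (y := y) h0
  linarith

lemma Qf_nonneg {y : ℝ} : 0 ≤ Qf V y := Qint_nonneg le_rfl

include hV in
lemma Qf_cont : ContinuousOn (Qf V) (Set.Icc 0 1) := by
  apply intervalIntegral.continuousOn_primitive
  rwa [integrableOn_Icc_iff_integrableOn_Ioc]

end Qlem
section expint
variable {V : ℝ → ℂ} (hV : IntegrableOn (fun s : ℝ => s * ‖V s‖) (Set.Ioc 0 1))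

include hV in
lemma Qf_aemeas : AEStronglyMeasurable (Qf V) (volume.restrict (Set.Ioc 0 1)) :=
  ((Qf_cont hV).aestronglyMeasurable measurableSet_Icc).mono_measure
    (Measure.restrict_mono Set.Ioc_subset_Icc_self le_rfl)

include hV in
lemma g_integrable :
    IntegrableOn (fun s => (s * ‖V s‖) * Real.exp (2 * Qf V s)) (Set.Ioc 0 1) := by
  apply MeasureTheory.Integrable.mono' (g := fun s => (s * ‖V s‖) * Real.exp (2 * Qf V 1))
    (hV.mul_const _)
  · have h1 : AEStronglyMeasurable (fun s => Real.exp (2 * Qf V s))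
        (volume.restrict (Set.Ioc 0 1)) :=
      (Real.continuous_exp.comp_aestronglyMeasurable ((Qf_aemeas hV).const_smul (2:ℝ)))
    exact hV.aestronglyMeasurable.mul h1
  · filter_upwards [MeasureTheory.ae_restrict_mem measurableSet_Ioc] with s hs
    have hq : 0 ≤ s * ‖V s‖ := mul_nonneg hs.1.le (norm_nonneg _)
    have : Real.exp (2 * Qf V s) ≤ Real.exp (2 * Qf V 1) := by
      apply Real.exp_le_exp.2
      have := Qf_mono hV hs.1.le hs.2 le_rfl
      linarith
    rw [Real.norm_eq_abs, abs_of_nonneg (mul_nonneg hq (Real.exp_pos _).le)]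
    exact mul_le_mul_of_nonneg_left this hq

end expint
section expint2
variable {V : ℝ → ℂ} (hV : IntegrableOn (fun s : ℝ => s * ‖V s‖) (Set.Ioc 0 1))

lemma key_ineq {a b ε : ℝ} (hab : a ≤ b) (hba : b - a ≤ ε) :
    Real.exp (2*b) * (b - a) ≤ Real.exp (2*ε) * (Real.exp (2*b) - Real.exp (2*a)) / 2 := by
  have e1 : (0:ℝ) < Real.exp (2*a) := Real.exp_pos _
  have e2 : 2*(b-a) + 1 ≤ Real.exp (2*(b-a)) := by
    have := Real.add_one_le_exp (2*(b-a)); linarith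
  have e3 : Real.exp (2*(b-a)) ≤ Real.exp (2*ε) := by
    apply Real.exp_le_exp.2; linarith
  have e4 : Real.exp (2*b) = Real.exp (2*a) * Real.exp (2*(b-a)) := by
    rw [← Real.exp_add]; ring_nf
  have hXpos : (0:ℝ) < Real.exp (2*(b-a)) := Real.exp_pos _
  have hA2t : Real.exp (2*a) * (2*(b-a)) ≤ Real.exp (2*a) * (Real.exp (2*(b-a)) - 1) :=
    mul_le_mul_of_nonneg_left (by linarith) e1.le
  have w1 : Real.exp (2*(b-a)) * (Real.exp (2*a) * (2*(b-a)))
      ≤ Real.exp (2*(b-a)) * (Real.exp (2*a) * (Real.exp (2*(b-a)) - 1)) :=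
    mul_le_mul_of_nonneg_left hA2t hXpos.le
  have w2 : Real.exp (2*(b-a)) * (Real.exp (2*a) * (Real.exp (2*(b-a)) - 1))
      ≤ Real.exp (2*ε) * (Real.exp (2*a) * (Real.exp (2*(b-a)) - 1)) := by
    apply mul_le_mul_of_nonneg_right e3
    have : (1:ℝ) ≤ Real.exp (2*(b-a)) := by nlinarith
    nlinarith
  rw [e4]
  nlinarith [w1, w2]

include hV in
lemma exp_integral_bound {r : ℝ} (hr : r ∈ Set.Ioc (0:ℝ) 1) :
    ∫ s in Set.Ioc (0:ℝ) r, (s * ‖V s‖) * Real.exp (2 * Qf V s)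
      ≤ Real.exp (2 * Qf V r) / 2 := by
  have hgint := g_integrable hV
  suffices H : ∀ ε > (0:ℝ), ∫ s in Set.Ioc (0:ℝ) r, (s * ‖V s‖) * Real.exp (2 * Qf V s)
      ≤ Real.exp (2*ε) * (Real.exp (2 * Qf V r) / 2) by
    have ht : Tendsto (fun ε : ℝ => Real.exp (2*ε) * (Real.exp (2 * Qf V r) / 2))
        (nhdsWithin 0 (Set.Ioi 0)) (nhds (Real.exp (2 * Qf V r) / 2)) := by
      have : ContinuousAt (fun ε : ℝ => Real.exp (2*ε) * (Real.exp (2 * Qf V r) / 2)) 0 := by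
        fun_prop
      have h2 := this.tendsto.mono_left (nhdsWithin_le_nhds (s := Set.Ioi (0:ℝ)))
      simpa using h2
    exact ge_of_tendsto ht (by filter_upwards [self_mem_nhdsWithin] with ε hε using H ε hε)
  intro ε hε
  -- uniform continuity of Qf on [0,1]
  have ucont : UniformContinuousOn (Qf V) (Set.Icc 0 1) :=
    isCompact_Icc.uniformContinuousOn_of_continuous (Qf_cont hV)
  rw [Metric.uniformContinuousOn_iff] at ucont
  obtain ⟨δ, hδpos, hδ⟩ := ucont ε hε
  obtain ⟨N, hN⟩ := exists_nat_gt (r/δ)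
  have hNpos : 0 < (N:ℝ) := lt_of_le_of_lt (div_nonneg hr.1.le hδpos.le) hN
  set c : ℕ → ℝ := fun j => j * (r/N) with hc
  have hcmem : ∀ j : ℕ, j ≤ N → c j ∈ Set.Icc (0:ℝ) r := by
    intro j hj
    constructor
    · exact mul_nonneg (Nat.cast_nonneg j) (div_nonneg hr.1.le hNpos.le)
    · have : (j:ℝ) * (r/N) ≤ (N:ℝ) * (r/N) := by
        apply mul_le_mul_of_nonneg_right (by exact_mod_cast hj) (div_nonneg hr.1.le hNpos.le)
      rw [mul_div_cancel₀ r (ne_of_gt hNpos)] at this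
      exact this
  have hgap : ∀ j : ℕ, c (j+1) - c j = r / N := by
    intro j; simp only [hc]; push_cast; ring
  have hgaplt : r / N < δ := by
    rw [div_lt_iff₀ hNpos]
    calc r = (r/δ) * δ := by field_simp
    _ < N * δ := by apply mul_lt_mul_of_pos_right hN hδpos
    _ = δ * N := by ring
  have key : ∀ n : ℕ, n ≤ N → ∫ s in Set.Ioc (0:ℝ) (c n), (s * ‖V s‖) * Real.exp (2 * Qf V s)
      ≤ Real.exp (2*ε) * (Real.exp (2 * Qf V (c n)) - 1) / 2 := by
    intro n hn
    induction n with
    | zero =>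
      simp only [hc, Nat.cast_zero, zero_mul, Set.Ioc_self, Measure.restrict_empty,
        integral_zero_measure]
      rw [Qf_zero]
      norm_num
    | succ n ih =>
      have hn' : n ≤ N := Nat.le_of_succ_le hn
      have ih' := ih hn'
      have h0n : 0 ≤ c n := (hcmem n hn').1
      have hmono : c n ≤ c (n+1) := by
        have := hgap n
        have h2 : c (n+1) = c n + r/N := by linarith
        have h3 : 0 ≤ r/N := div_nonneg hr.1.le hNpos.le
        linarith
      have hcn1 : c (n+1) ≤ 1 := le_trans (hcmem (n+1) hn).2 hr.2
      rw [primdiff hgint h0n hmono hcn1]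
      set a := Qf V (c n)
      set b := Qf V (c (n+1))
      have hab : a ≤ b := Qf_mono hV h0n hmono hcn1
      have hba : b - a ≤ ε := by
        have hd := hδ (c n) (Set.mem_Icc.2 ⟨h0n, le_trans (hcmem n hn').2 hr.2⟩)
          (c (n+1)) (Set.mem_Icc.2 ⟨le_trans h0n hmono, hcn1⟩) ?_
        · rw [Real.dist_eq] at hd
          have := abs_lt.1 hd
          linarith
        · rw [Real.dist_eq, abs_of_nonpos (by linarith), hc]
          have := hgap n
          simp only [hc] at this
          linarith [hgaplt]
      have hpiece : ∫ s in Set.Ioc (c n) (c (n+1)), (s * ‖V s‖) * Real.exp (2 * Qf V s)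
          ≤ Real.exp (2*b) * (b - a) := by
        have h1 : ∫ s in Set.Ioc (c n) (c (n+1)), (s * ‖V s‖) * Real.exp (2 * Qf V s)
            ≤ ∫ s in Set.Ioc (c n) (c (n+1)), (s * ‖V s‖) * Real.exp (2 * b) := by
          apply MeasureTheory.setIntegral_mono_on
          · exact hgint.mono_set (Set.Ioc_subset_Ioc h0n hcn1)
          · exact (hV.mono_set (Set.Ioc_subset_Ioc h0n hcn1)).mul_const _
          · exact measurableSet_Ioc
          · intro s hs
            have hq : 0 ≤ s * ‖V s‖ := mul_nonneg (h0n.trans hs.1.le) (norm_nonneg _)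
            apply mul_le_mul_of_nonneg_left _ hq
            apply Real.exp_le_exp.2
            have : Qf V s ≤ b := Qf_mono hV (h0n.trans hs.1.le) hs.2 hcn1
            linarith
        rw [MeasureTheory.integral_mul_const] at h1
        rw [← Qf_sub hV h0n hmono hcn1] at h1
        calc _ ≤ (b - a) * Real.exp (2*b) := h1
        _ = Real.exp (2*b) * (b - a) := by ring
      have hkey := key_ineq hab hba
      have := key_ineq hab hba
      linarith
  have := key N le_rfl
  have hcN : c N = r := by
    simp only [hc]; field_simp
  rw [hcN] at this
  have hpos : (0:ℝ) < Real.exp (2*ε) := Real.exp_pos _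
  nlinarith [Real.exp_pos (2 * Qf V r)]

end expint2
noncomputable def prim (V f : ℝ → ℂ) (p x : ℝ) : ℂ :=
  ∫ s in Set.Ioc (0:ℝ) x, ((s ^ p : ℝ)) • (V s * f s)

section prim
variable {V : ℝ → ℂ} (hVmeas : Measurable V)
  (hV : IntegrableOn (fun s : ℝ => s * ‖V s‖) (Set.Ioc 0 1))

include hVmeas hV in
lemma prim_integrand_integrable {f : ℝ → ℂ}
    (hf : AEStronglyMeasurable f (volume.restrict (Set.Ioc 0 1)))
    {p ℓ M : ℝ} (hℓ : 0 ≤ ℓ) (hp : 0 ≤ p + ℓ) (hM : 0 ≤ M)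
    (hfb : ∀ s ∈ Set.Ioc (0:ℝ) 1, ‖f s‖ ≤ M * s ^ (ℓ+1)) :
    IntegrableOn (fun s => ((s ^ p : ℝ)) • (V s * f s)) (Set.Ioc 0 1) := by
  apply MeasureTheory.Integrable.mono' (g := fun s => M * (s * ‖V s‖)) (hV.const_mul M)
  · have hrp : ContinuousOn (fun s : ℝ => s ^ p) (Set.Ioc 0 1) := fun x hx =>
      (Real.continuousAt_rpow_const x p (Or.inl (ne_of_gt hx.1))).continuousWithinAt
    exact (hrp.aestronglyMeasurable measurableSet_Ioc).smul
      ((hVmeas.aestronglyMeasurable.restrict).mul hf)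
  · filter_upwards [MeasureTheory.ae_restrict_mem measurableSet_Ioc] with s hs
    have hs0 : (0:ℝ) < s := hs.1
    rw [norm_smul, Real.norm_eq_abs, abs_of_nonneg (Real.rpow_nonneg hs0.le p), norm_mul]
    calc s ^ p * (‖V s‖ * ‖f s‖) ≤ s ^ p * (‖V s‖ * (M * s ^ (ℓ+1))) := by
          apply mul_le_mul_of_nonneg_left _ (Real.rpow_nonneg hs0.le p)
          exact mul_le_mul_of_nonneg_left (hfb s hs) (norm_nonneg _)
      _ = M * (s ^ (p + (ℓ+1)) * ‖V s‖) := by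
          rw [Real.rpow_add hs0 p (ℓ+1), Real.rpow_add hs0 ℓ 1, Real.rpow_one]; ring
      _ ≤ M * (s * ‖V s‖) := by
          apply mul_le_mul_of_nonneg_left _ hM
          apply mul_le_mul_of_nonneg_right _ (norm_nonneg _)
          calc s ^ (p + (ℓ+1)) ≤ s ^ (1:ℝ) :=
                Real.rpow_le_rpow_of_exponent_ge hs0 hs.2 (by linarith)
            _ = s := Real.rpow_one s

lemma prim_cont {F : ℝ → ℂ} (hint : IntegrableOn F (Set.Ioc 0 1)) :
    ContinuousOn (fun x => ∫ s in Set.Ioc (0:ℝ) x, F s) (Set.Icc 0 1) := by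
  apply intervalIntegral.continuousOn_primitive
  rwa [integrableOn_Icc_iff_integrableOn_Ioc]

end prim
lemma besselKer_abs_le {ℓ x s : ℝ} (hℓ : 0 ≤ ℓ) (hs : 0 < s) (hsx : s ≤ x) :
    |besselKer ℓ x s| ≤ x ^ (ℓ+1) * s ^ (-ℓ) := by
  have hx : 0 < x := hs.trans_le hsx
  have hBA : s ^ (ℓ+1) / x ^ ℓ ≤ x ^ (ℓ+1) / s ^ ℓ := by
    rw [div_le_div_iff₀ (Real.rpow_pos_of_pos hx ℓ) (Real.rpow_pos_of_pos hs ℓ)]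
    calc s ^ (ℓ+1) * s ^ ℓ = s ^ ((ℓ+1) + ℓ) := (Real.rpow_add hs _ _).symm
      _ ≤ x ^ ((ℓ+1) + ℓ) := Real.rpow_le_rpow hs.le hsx (by linarith)
      _ = x ^ (ℓ+1) * x ^ ℓ := Real.rpow_add hx _ _
  have h0B : 0 ≤ s ^ (ℓ+1) / x ^ ℓ :=
    div_nonneg (Real.rpow_nonneg hs.le _) (Real.rpow_nonneg hx.le _)
  have hc1 : (0:ℝ) < 2*ℓ+1 := by linarith
  have hcle : 1/(2*ℓ+1) ≤ (1:ℝ) := by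
    rw [div_le_one hc1]; linarith
  rw [besselKer, abs_mul, abs_of_nonneg (by positivity : (0:ℝ) ≤ 1/(2*ℓ+1)),
    abs_of_nonneg (by linarith : (0:ℝ) ≤ x ^ (ℓ+1) / s ^ ℓ - s ^ (ℓ+1) / x ^ ℓ)]
  have h2 : x ^ (ℓ+1) / s ^ ℓ - s ^ (ℓ+1) / x ^ ℓ ≤ x ^ (ℓ+1) * s ^ (-ℓ) := by
    rw [Real.rpow_neg hs.le, ← div_eq_mul_inv]
    linarith
  calc 1/(2*ℓ+1) * (x ^ (ℓ+1) / s ^ ℓ - s ^ (ℓ+1) / x ^ ℓ)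
      ≤ 1 * (x ^ (ℓ+1) / s ^ ℓ - s ^ (ℓ+1) / x ^ ℓ) := by
        apply mul_le_mul_of_nonneg_right hcle (by linarith)
    _ = x ^ (ℓ+1) / s ^ ℓ - s ^ (ℓ+1) / x ^ ℓ := one_mul _
    _ ≤ x ^ (ℓ+1) * s ^ (-ℓ) := h2

section psi
variable {V : ℝ → ℂ} (hVmeas : Measurable V)
  (hV : IntegrableOn (fun s : ℝ => s * ‖V s‖) (Set.Ioc 0 1))

include hVmeas hV in
lemma split_integral {f : ℝ → ℂ}
    (hf : AEStronglyMeasurable f (volume.restrict (Set.Ioc 0 1)))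
    {ℓ M : ℝ} (hℓ : 0 ≤ ℓ) (hM : 0 ≤ M)
    (hfb : ∀ s ∈ Set.Ioc (0:ℝ) 1, ‖f s‖ ≤ M * s ^ (ℓ+1)) {x : ℝ} (hx : x ∈ Set.Ioc (0:ℝ) 1) :
    (∫ s in Set.Ioc (0:ℝ) x, ((besselKer ℓ x s : ℝ) : ℂ) * V s * f s)
      = (1/(2*ℓ+1) : ℝ) • (((x ^ (ℓ+1) : ℝ)) • prim V f (-ℓ) x
        - ((x ^ (-ℓ) : ℝ)) • prim V f (ℓ+1) x) := by
  have hint1 := prim_integrand_integrable hVmeas hV hf hℓ (p := -ℓ) (by linarith) hM hfb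
  have hint2 := prim_integrand_integrable hVmeas hV hf hℓ (p := ℓ+1) (by linarith) hM hfb
  have hx0 : (0:ℝ) < x := hx.1
  have hcg : Set.EqOn (fun s => ((besselKer ℓ x s : ℝ) : ℂ) * V s * f s)
      (fun s => (1/(2*ℓ+1) : ℝ) • (((x ^ (ℓ+1) : ℝ)) • (((s ^ (-ℓ) : ℝ)) • (V s * f s))
        - ((x ^ (-ℓ) : ℝ)) • (((s ^ (ℓ+1) : ℝ)) • (V s * f s)))) (Set.Ioc 0 x) := by
    intro s hs
    have hs0 : (0:ℝ) < s := hs.1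
    have hb : besselKer ℓ x s
        = (1/(2*ℓ+1)) * (x ^ (ℓ+1) * s ^ (-ℓ) - x ^ (-ℓ) * s ^ (ℓ+1)) := by
      rw [besselKer, Real.rpow_neg hs0.le, Real.rpow_neg hx0.le, div_eq_mul_inv,
        div_eq_mul_inv]
      ring
    show ((besselKer ℓ x s : ℝ) : ℂ) * V s * f s = _
    rw [hb]
    push_cast
    simp only [Complex.real_smul]
    push_cast
    ring
  rw [MeasureTheory.setIntegral_congr_fun measurableSet_Ioc hcg]
  have hi1 : IntegrableOn (fun s => ((s ^ (-ℓ) : ℝ)) • (V s * f s)) (Set.Ioc 0 x) :=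
    hint1.mono_set (Set.Ioc_subset_Ioc le_rfl hx.2)
  have hi2 : IntegrableOn (fun s => ((s ^ (ℓ+1) : ℝ)) • (V s * f s)) (Set.Ioc 0 x) :=
    hint2.mono_set (Set.Ioc_subset_Ioc le_rfl hx.2)
  have hi1' : Integrable (fun s => ((x ^ (ℓ+1) : ℝ)) • (((s ^ (-ℓ) : ℝ)) • (V s * f s)))
      (volume.restrict (Set.Ioc (0:ℝ) x)) := hi1.fun_smul _
  have hi2' : Integrable (fun s => ((x ^ (-ℓ) : ℝ)) • (((s ^ (ℓ+1) : ℝ)) • (V s * f s)))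
      (volume.restrict (Set.Ioc (0:ℝ) x)) := hi2.fun_smul _
  rw [MeasureTheory.integral_smul, MeasureTheory.integral_sub hi1' hi2',
    MeasureTheory.integral_smul, MeasureTheory.integral_smul]
  rfl

include hVmeas hV in
lemma psi_facts {ℓ : ℝ} (hℓ : 0 ≤ ℓ) (k : ℕ) :
    ContinuousOn (sppsPsi ℓ V k) (Set.Ioc 0 1) ∧
    ∀ r ∈ Set.Ioc (0:ℝ) 1,
      ‖sppsPsi ℓ V k r‖ ≤ r ^ (ℓ+1) * (Real.exp (2 * Qf V r) * (1/2 : ℝ)^k) := by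
  induction k with
  | zero =>
    constructor
    · intro x hx
      exact (Complex.continuous_ofReal.continuousAt.comp
        (Real.continuousAt_rpow_const x (ℓ+1) (Or.inl (ne_of_gt hx.1)))).continuousWithinAt
    · intro r hr
      have h1 : ‖sppsPsi ℓ V 0 r‖ = r ^ (ℓ+1) := by
        show ‖((r ^ (ℓ+1) : ℝ) : ℂ)‖ = _
        rw [Complex.norm_real, Real.norm_eq_abs, abs_of_nonneg (Real.rpow_nonneg hr.1.le _)]
      rw [h1, pow_zero]
      have : (1:ℝ) ≤ Real.exp (2 * Qf V r) := by
        rw [Real.one_le_exp_iff]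
        have := Qf_nonneg (V := V) (y := r); positivity
      nlinarith [Real.rpow_nonneg hr.1.le (ℓ+1)]
  | succ k ih =>
    obtain ⟨ihc, ihb⟩ := ih
    set ψ := sppsPsi ℓ V k with hψdef
    set M := Real.exp (2 * Qf V 1) * (1/2:ℝ)^k with hM
    have hMnn : 0 ≤ M := by positivity
    have hfb : ∀ s ∈ Set.Ioc (0:ℝ) 1, ‖ψ s‖ ≤ M * s ^ (ℓ+1) := by
      intro s hs
      calc ‖ψ s‖ ≤ s ^ (ℓ+1) * (Real.exp (2 * Qf V s) * (1/2:ℝ)^k) := ihb s hs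
        _ ≤ s ^ (ℓ+1) * (Real.exp (2 * Qf V 1) * (1/2:ℝ)^k) := by
            apply mul_le_mul_of_nonneg_left _ (Real.rpow_nonneg hs.1.le _)
            apply mul_le_mul_of_nonneg_right _ (by positivity)
            exact Real.exp_le_exp.2 (by linarith [Qf_mono hV hs.1.le hs.2 le_rfl])
        _ = M * s ^ (ℓ+1) := by rw [hM]; ring
    have hfmeas : AEStronglyMeasurable ψ (volume.restrict (Set.Ioc 0 1)) :=
      ihc.aestronglyMeasurable measurableSet_Ioc
    have hint1 := prim_integrand_integrable hVmeas hV hfmeas hℓ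
      (p := -ℓ) (by linarith) hMnn hfb
    have hint2 := prim_integrand_integrable hVmeas hV hfmeas hℓ
      (p := ℓ+1) (by linarith) hMnn hfb
    have hint1 := prim_integrand_integrable hVmeas hV hfmeas hℓ (p := -ℓ) (by linarith) hMnn hfb
    have hint2 := prim_integrand_integrable hVmeas hV hfmeas hℓ (p := ℓ+1) (by linarith) hMnn hfb
    have formula : ∀ x ∈ Set.Ioc (0:ℝ) 1, sppsPsi ℓ V (k+1) x
        = (1/(2*ℓ+1) : ℝ) • (((x ^ (ℓ+1) : ℝ)) • prim V ψ (-ℓ) x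
          - ((x ^ (-ℓ) : ℝ)) • prim V ψ (ℓ+1) x) := fun x hx =>
      split_integral hVmeas hV hfmeas hℓ hMnn hfb hx
    constructor
    · -- continuity
      have hc1 : ContinuousOn (prim V ψ (-ℓ)) (Set.Icc 0 1) := prim_cont hint1
      have hc2 : ContinuousOn (prim V ψ (ℓ+1)) (Set.Icc 0 1) := prim_cont hint2
      have hrp1 : ContinuousOn (fun x : ℝ => x ^ (ℓ+1)) (Set.Ioc 0 1) := fun x hx =>
        (Real.continuousAt_rpow_const x (ℓ+1) (Or.inl (ne_of_gt hx.1))).continuousWithinAt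
      have hrp2 : ContinuousOn (fun x : ℝ => x ^ (-ℓ)) (Set.Ioc 0 1) := fun x hx =>
        (Real.continuousAt_rpow_const x (-ℓ) (Or.inl (ne_of_gt hx.1))).continuousWithinAt
      have : ContinuousOn (fun x => (1/(2*ℓ+1) : ℝ) • (((x ^ (ℓ+1) : ℝ)) • prim V ψ (-ℓ) x
          - ((x ^ (-ℓ) : ℝ)) • prim V ψ (ℓ+1) x)) (Set.Ioc 0 1) := by
        exact ((hrp1.smul (hc1.mono Set.Ioc_subset_Icc_self)).sub
          (hrp2.smul (hc2.mono Set.Ioc_subset_Icc_self))).const_smul ((1/(2*ℓ+1) : ℝ))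
      exact ContinuousOn.congr this formula
    · -- norm bound
      intro r hr
      have hr0 : (0:ℝ) < r := hr.1
      have hbd : ∀ᵐ s ∂(volume.restrict (Set.Ioc (0:ℝ) r)),
          ‖((besselKer ℓ r s : ℝ) : ℂ) * V s * ψ s‖
            ≤ (r ^ (ℓ+1) * (1/2:ℝ)^k) * ((s * ‖V s‖) * Real.exp (2 * Qf V s)) := by
        filter_upwards [MeasureTheory.ae_restrict_mem measurableSet_Ioc] with s hs
        have hs0 : (0:ℝ) < s := hs.1
        have hs1 : s ∈ Set.Ioc (0:ℝ) 1 := ⟨hs.1, hs.2.trans hr.2⟩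
        have hK := besselKer_abs_le hℓ hs0 hs.2
        have hψb := ihb s hs1
        rw [norm_mul, norm_mul, Complex.norm_real, Real.norm_eq_abs]
        calc |besselKer ℓ r s| * ‖V s‖ * ‖ψ s‖
            ≤ (r ^ (ℓ+1) * s ^ (-ℓ)) * ‖V s‖ * (s ^ (ℓ+1) * (Real.exp (2 * Qf V s) * (1/2:ℝ)^k)) :=
              mul_le_mul (mul_le_mul_of_nonneg_right hK (norm_nonneg _)) hψb (norm_nonneg _)
                (by positivity)
          _ = (r ^ (ℓ+1) * (1/2:ℝ)^k) * (((s ^ (-ℓ) * s ^ (ℓ+1)) * ‖V s‖) * Real.exp (2 * Qf V s)) := by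
              ring
          _ = (r ^ (ℓ+1) * (1/2:ℝ)^k) * ((s * ‖V s‖) * Real.exp (2 * Qf V s)) := by
              rw [← Real.rpow_add hs0, show -ℓ + (ℓ+1) = (1:ℝ) by ring, Real.rpow_one]
      have hgint : Integrable (fun s => (r ^ (ℓ+1) * (1/2:ℝ)^k) * ((s * ‖V s‖) * Real.exp (2 * Qf V s)))
          (volume.restrict (Set.Ioc (0:ℝ) r)) :=
        ((g_integrable hV).mono_set (Set.Ioc_subset_Ioc le_rfl hr.2)).const_mul _
      have h1 : ‖sppsPsi ℓ V (k+1) r‖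
          ≤ ∫ s in Set.Ioc (0:ℝ) r, (r ^ (ℓ+1) * (1/2:ℝ)^k) * ((s * ‖V s‖) * Real.exp (2 * Qf V s)) :=
        MeasureTheory.norm_integral_le_of_norm_le hgint hbd
      rw [MeasureTheory.integral_const_mul] at h1
      have h2 := exp_integral_bound hV hr
      calc ‖sppsPsi ℓ V (k+1) r‖
          ≤ (r ^ (ℓ+1) * (1/2:ℝ)^k) * ∫ s in Set.Ioc (0:ℝ) r, (s * ‖V s‖) * Real.exp (2 * Qf V s) := h1
        _ ≤ (r ^ (ℓ+1) * (1/2:ℝ)^k) * (Real.exp (2 * Qf V r) / 2) := by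
            apply mul_le_mul_of_nonneg_left h2 (by positivity)
        _ = r ^ (ℓ+1) * (Real.exp (2 * Qf V r) * (1/2:ℝ)^(k+1)) := by
            rw [pow_succ]; ring

end psi
section w
variable {V : ℝ → ℂ} (hVmeas : Measurable V)
  (hV : IntegrableOn (fun s : ℝ => s * ‖V s‖) (Set.Ioc 0 1))

include hVmeas hV in
lemma w_summable {ℓ : ℝ} (hℓ : 0 ≤ ℓ) {r : ℝ} (hr : r ∈ Set.Ioc (0:ℝ) 1) :
    Summable (fun k => sppsPsi ℓ V k r) := by
  apply Summable.of_norm_bounded (g := fun k => (r ^ (ℓ+1) * Real.exp (2 * Qf V r)) * (1/2:ℝ)^k)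
  · exact (summable_geometric_of_lt_one (by norm_num) (by norm_num)).mul_left _
  · intro k
    calc ‖sppsPsi ℓ V k r‖ ≤ r ^ (ℓ+1) * (Real.exp (2 * Qf V r) * (1/2:ℝ)^k) :=
        (psi_facts hVmeas hV hℓ k).2 r hr
      _ = (r ^ (ℓ+1) * Real.exp (2 * Qf V r)) * (1/2:ℝ)^k := by ring

include hVmeas hV in
lemma w_norm_le {ℓ : ℝ} (hℓ : 0 ≤ ℓ) {r : ℝ} (hr : r ∈ Set.Ioc (0:ℝ) 1) :
    ‖sppsW ℓ V r‖ ≤ (2 * Real.exp (2 * Qf V r)) * r ^ (ℓ+1) := by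
  have hb : ∀ k : ℕ, ‖sppsPsi ℓ V k r‖ ≤ (r ^ (ℓ+1) * Real.exp (2 * Qf V r)) * (1/2:ℝ)^k := by
    intro k
    calc ‖sppsPsi ℓ V k r‖ ≤ r ^ (ℓ+1) * (Real.exp (2 * Qf V r) * (1/2:ℝ)^k) :=
        (psi_facts hVmeas hV hℓ k).2 r hr
      _ = (r ^ (ℓ+1) * Real.exp (2 * Qf V r)) * (1/2:ℝ)^k := by ring
  have hgs : Summable (fun k : ℕ => (r ^ (ℓ+1) * Real.exp (2 * Qf V r)) * (1/2:ℝ)^k) :=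
    (summable_geometric_of_lt_one (by norm_num) (by norm_num)).mul_left _
  have hns : Summable (fun k => ‖sppsPsi ℓ V k r‖) :=
    Summable.of_nonneg_of_le (fun k => norm_nonneg _) hb hgs
  calc ‖sppsW ℓ V r‖ ≤ ∑' k, ‖sppsPsi ℓ V k r‖ := norm_tsum_le_tsum_norm hns
    _ ≤ ∑' k : ℕ, (r ^ (ℓ+1) * Real.exp (2 * Qf V r)) * (1/2:ℝ)^k := Summable.tsum_le_tsum hb hns hgs
    _ = (r ^ (ℓ+1) * Real.exp (2 * Qf V r)) * ∑' k : ℕ, (1/2:ℝ)^k := tsum_mul_left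
    _ = (r ^ (ℓ+1) * Real.exp (2 * Qf V r)) * 2 := by
        rw [tsum_geometric_of_lt_one (by norm_num) (by norm_num)]; norm_num
    _ = (2 * Real.exp (2 * Qf V r)) * r ^ (ℓ+1) := by ring

include hVmeas hV in
lemma w_bound' {ℓ : ℝ} (hℓ : 0 ≤ ℓ) : ∀ s ∈ Set.Ioc (0:ℝ) 1,
    ‖sppsW ℓ V s‖ ≤ (2 * Real.exp (2 * Qf V 1)) * s ^ (ℓ+1) := by
  intro s hs
  calc ‖sppsW ℓ V s‖ ≤ (2 * Real.exp (2 * Qf V s)) * s ^ (ℓ+1) := w_norm_le hVmeas hV hℓ hs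
    _ ≤ (2 * Real.exp (2 * Qf V 1)) * s ^ (ℓ+1) := by
        apply mul_le_mul_of_nonneg_right _ (Real.rpow_nonneg hs.1.le _)
        have := Qf_mono hV hs.1.le hs.2 le_rfl
        have h2 := Real.exp_le_exp.2 (by linarith : 2 * Qf V s ≤ 2 * Qf V 1)
        linarith

include hVmeas hV in
lemma w_aesm {ℓ : ℝ} (hℓ : 0 ≤ ℓ) :
    AEStronglyMeasurable (sppsW ℓ V) (volume.restrict (Set.Ioc (0:ℝ) 1)) := by
  apply aestronglyMeasurable_of_tendsto_ae (u := atTop)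
    (f := fun n => fun r => ∑ k ∈ Finset.range n, sppsPsi ℓ V k r)
  · intro n
    apply Finset.aestronglyMeasurable_fun_sum
    intro k _
    exact ((psi_facts hVmeas hV hℓ k).1.aestronglyMeasurable measurableSet_Ioc)
  · filter_upwards [MeasureTheory.ae_restrict_mem measurableSet_Ioc] with r hr
    exact (w_summable hVmeas hV hℓ hr).hasSum.tendsto_sum_nat

end w
section weq
variable {V : ℝ → ℂ} (hVmeas : Measurable V)
  (hV : IntegrableOn (fun s : ℝ => s * ‖V s‖) (Set.Ioc 0 1))

include hVmeas hV in
lemma w_eq {ℓ : ℝ} (hℓ : 0 ≤ ℓ) {x : ℝ} (hx : x ∈ Set.Ioc (0:ℝ) 1) :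
    sppsW ℓ V x = ((x ^ (ℓ+1) : ℝ) : ℂ)
      + (1/(2*ℓ+1) : ℝ) • (((x ^ (ℓ+1) : ℝ)) • prim V (sppsW ℓ V) (-ℓ) x
        - ((x ^ (-ℓ) : ℝ)) • prim V (sppsW ℓ V) (ℓ+1) x) := by
  have hx0 : (0:ℝ) < x := hx.1
  set f : ℕ → ℝ → ℂ := fun k s => ((besselKer ℓ x s : ℝ) : ℂ) * V s * sppsPsi ℓ V k s with hf
  set μ := volume.restrict (Set.Ioc (0:ℝ) x) with hμ
  -- measurability
  have hKc : ContinuousOn (fun s => besselKer ℓ x s) (Set.Ioc (0:ℝ) x) := by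
    apply ContinuousOn.mul continuousOn_const
    apply ContinuousOn.sub
    · apply ContinuousOn.div continuousOn_const
      · exact fun s hs =>
          (Real.continuousAt_rpow_const s ℓ (Or.inl (ne_of_gt hs.1))).continuousWithinAt
      · exact fun s hs => ne_of_gt (Real.rpow_pos_of_pos hs.1 ℓ)
    · apply ContinuousOn.div_const
      exact fun s hs =>
        (Real.continuousAt_rpow_const s (ℓ+1) (Or.inl (ne_of_gt hs.1))).continuousWithinAt
  have hfm : ∀ k, AEStronglyMeasurable (f k) μ := by
    intro k
    apply AEStronglyMeasurable.mul
    · apply AEStronglyMeasurable.mul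
      · exact (Complex.continuous_ofReal.comp_continuousOn hKc).aestronglyMeasurable
          measurableSet_Ioc
      · exact hVmeas.aestronglyMeasurable.restrict
    · exact ((psi_facts hVmeas hV hℓ k).1.mono
        (Set.Ioc_subset_Ioc le_rfl hx.2)).aestronglyMeasurable measurableSet_Ioc
  -- pointwise bound
  have hfkb : ∀ k : ℕ, ∀ s ∈ Set.Ioc (0:ℝ) x, ‖f k s‖
      ≤ (x ^ (ℓ+1) * (1/2:ℝ)^k) * ((s * ‖V s‖) * Real.exp (2 * Qf V s)) := by
    intro k s hs
    have hs0 : (0:ℝ) < s := hs.1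
    have hs1 : s ∈ Set.Ioc (0:ℝ) 1 := ⟨hs.1, hs.2.trans hx.2⟩
    have hK := besselKer_abs_le hℓ hs0 hs.2
    have hψb := (psi_facts hVmeas hV hℓ k).2 s hs1
    rw [hf]
    simp only []
    rw [norm_mul, norm_mul, Complex.norm_real, Real.norm_eq_abs]
    calc |besselKer ℓ x s| * ‖V s‖ * ‖sppsPsi ℓ V k s‖
        ≤ (x ^ (ℓ+1) * s ^ (-ℓ)) * ‖V s‖
            * (s ^ (ℓ+1) * (Real.exp (2 * Qf V s) * (1/2:ℝ)^k)) :=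
          mul_le_mul (mul_le_mul_of_nonneg_right hK (norm_nonneg _)) hψb (norm_nonneg _)
            (by positivity)
      _ = (x ^ (ℓ+1) * (1/2:ℝ)^k)
            * (((s ^ (-ℓ) * s ^ (ℓ+1)) * ‖V s‖) * Real.exp (2 * Qf V s)) := by ring
      _ = (x ^ (ℓ+1) * (1/2:ℝ)^k) * ((s * ‖V s‖) * Real.exp (2 * Qf V s)) := by
          rw [← Real.rpow_add hs0, show -ℓ + (ℓ+1) = (1:ℝ) by ring, Real.rpow_one]
  -- the lintegral bound
  have hgint : IntegrableOn (fun s => (s * ‖V s‖) * Real.exp (2 * Qf V s)) (Set.Ioc (0:ℝ) x) :=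
    (g_integrable hV).mono_set (Set.Ioc_subset_Ioc le_rfl hx.2)
  have hgnn : 0 ≤ᵐ[μ] fun s => (s * ‖V s‖) * Real.exp (2 * Qf V s) := by
    filter_upwards [MeasureTheory.ae_restrict_mem measurableSet_Ioc] with s hs
    have : 0 ≤ s * ‖V s‖ := mul_nonneg hs.1.le (norm_nonneg _)
    positivity
  have hce : (0:ℝ) ≤ x ^ (ℓ+1) * (Real.exp (2 * Qf V x) / 2) := by positivity
  have hne : ∑' k, ∫⁻ a, ‖f k a‖₊ ∂μ ≠ ⊤ := by
    have hklt : ∀ k : ℕ, ∫⁻ a, ‖f k a‖₊ ∂μ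
        ≤ ENNReal.ofReal ((x ^ (ℓ+1) * (Real.exp (2 * Qf V x) / 2)) * (1/2:ℝ)^k) := by
      intro k
      have h1 : ∫⁻ a, ‖f k a‖₊ ∂μ
          ≤ ∫⁻ a, ENNReal.ofReal ((x ^ (ℓ+1) * (1/2:ℝ)^k)
              * ((a * ‖V a‖) * Real.exp (2 * Qf V a))) ∂μ := by
        apply MeasureTheory.lintegral_mono_ae
        filter_upwards [MeasureTheory.ae_restrict_mem measurableSet_Ioc] with s hs
        rw [← enorm_eq_nnnorm, ← ofReal_norm]
        exact ENNReal.ofReal_le_ofReal (hfkb k s hs)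
      have h2 : ∫⁻ a, ENNReal.ofReal ((x ^ (ℓ+1) * (1/2:ℝ)^k)
            * ((a * ‖V a‖) * Real.exp (2 * Qf V a))) ∂μ
          = ENNReal.ofReal (∫ a, (x ^ (ℓ+1) * (1/2:ℝ)^k)
              * ((a * ‖V a‖) * Real.exp (2 * Qf V a)) ∂μ) := by
        rw [MeasureTheory.ofReal_integral_eq_lintegral_ofReal (hgint.const_mul _)]
        filter_upwards [hgnn] with s hs
        exact mul_nonneg (by positivity) hs
      have h3 : (∫ a, (x ^ (ℓ+1) * (1/2:ℝ)^k) * ((a * ‖V a‖) * Real.exp (2 * Qf V a)) ∂μ)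
          ≤ (x ^ (ℓ+1) * (Real.exp (2 * Qf V x) / 2)) * (1/2:ℝ)^k := by
        rw [MeasureTheory.integral_const_mul]
        calc (x ^ (ℓ+1) * (1/2:ℝ)^k) * ∫ a in Set.Ioc (0:ℝ) x, (a * ‖V a‖) * Real.exp (2 * Qf V a)
            ≤ (x ^ (ℓ+1) * (1/2:ℝ)^k) * (Real.exp (2 * Qf V x) / 2) := by
              apply mul_le_mul_of_nonneg_left (exp_integral_bound hV hx) (by positivity)
          _ = (x ^ (ℓ+1) * (Real.exp (2 * Qf V x) / 2)) * (1/2:ℝ)^k := by ring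
      exact (h1.trans h2.le).trans (ENNReal.ofReal_le_ofReal h3)
    have hsum : Summable (fun k : ℕ => (x ^ (ℓ+1) * (Real.exp (2 * Qf V x) / 2)) * (1/2:ℝ)^k) :=
      (summable_geometric_of_lt_one (by norm_num) (by norm_num)).mul_left _
    apply ne_top_of_le_ne_top (@ENNReal.ofReal_ne_top
      (∑' k : ℕ, (x ^ (ℓ+1) * (Real.exp (2 * Qf V x) / 2)) * (1/2:ℝ)^k))
    calc ∑' k, ∫⁻ a, ‖f k a‖₊ ∂μ
        ≤ ∑' k, ENNReal.ofReal ((x ^ (ℓ+1) * (Real.exp (2 * Qf V x) / 2)) * (1/2:ℝ)^k) :=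
          ENNReal.tsum_le_tsum hklt
      _ = ENNReal.ofReal (∑' k : ℕ, (x ^ (ℓ+1) * (Real.exp (2 * Qf V x) / 2)) * (1/2:ℝ)^k) :=
          (ENNReal.ofReal_tsum_of_nonneg (fun k => by positivity) hsum).symm
  -- the swap
  have hswap := MeasureTheory.integral_tsum hfm hne
  have hsum0 := w_summable hVmeas hV hℓ hx
  have h0 : sppsW ℓ V x = sppsPsi ℓ V 0 x + ∑' k, sppsPsi ℓ V (k+1) x := by
    rw [sppsW, hsum0.tsum_eq_zero_add]
  have h1 : ∀ k : ℕ, sppsPsi ℓ V (k+1) x = ∫ a, f k a ∂μ := fun k => rfl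
  have h2 : ∑' k, sppsPsi ℓ V (k+1) x = ∫ a, ∑' k, f k a ∂μ := by
    rw [hswap]
    exact tsum_congr h1
  have h3 : ∫ a, ∑' k, f k a ∂μ
      = ∫ s in Set.Ioc (0:ℝ) x, ((besselKer ℓ x s : ℝ) : ℂ) * V s * sppsW ℓ V s := by
    rw [hμ]
    apply MeasureTheory.setIntegral_congr_fun measurableSet_Ioc
    intro s _
    show ∑' k, ((besselKer ℓ x s : ℝ) : ℂ) * V s * sppsPsi ℓ V k s = _
    simp_rw [mul_assoc]
    rw [tsum_mul_left, tsum_mul_left]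
    rfl
  have h4 := split_integral hVmeas hV (w_aesm hVmeas hV hℓ) hℓ
    (M := 2 * Real.exp (2 * Qf V 1)) (by positivity) (w_bound' hVmeas hV hℓ) hx
  rw [h0, h2, h3, h4]
  rfl

end weq
lemma abs_one_sub_rpow {u p : ℝ} (hu : 0 < u) (hu2 : u ≤ 2) (hp : 1 ≤ p) :
    |1 - u ^ p| ≤ p * 2 ^ (p-1) * |1 - u| := by
  have h2p : (1:ℝ) ≤ 2 ^ (p-1) := by
    calc (1:ℝ) = 2 ^ (0:ℝ) := (Real.rpow_zero 2).symm
      _ ≤ 2 ^ (p-1) := Real.rpow_le_rpow_of_exponent_le one_le_two (by linarith)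
  rcases le_or_gt u 1 with h | h
  · have hb : 1 + p * (u - 1) ≤ u ^ p := by
      have := one_add_mul_self_le_rpow_one_add (by linarith : (-1:ℝ) ≤ u - 1) hp
      simpa using this
    have hu1 : u ^ p ≤ 1 := Real.rpow_le_one hu.le h (by linarith)
    rw [abs_of_nonneg (by linarith), abs_of_nonneg (by linarith)]
    nlinarith
  · have hv : (0:ℝ) < u⁻¹ := by positivity
    have hb : 1 + p * (u⁻¹ - 1) ≤ (u⁻¹) ^ p := by
      have := one_add_mul_self_le_rpow_one_add (by nlinarith : (-1:ℝ) ≤ u⁻¹ - 1) hp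
      simpa using this
    have hup : (0:ℝ) < u ^ p := Real.rpow_pos_of_pos hu _
    have hprod : (u⁻¹) ^ p * u ^ p = 1 := by
      rw [← Real.mul_rpow hv.le hu.le, inv_mul_cancel₀ (ne_of_gt hu), Real.one_rpow]
    have hmul : (1 + p * (u⁻¹ - 1)) * u ^ p ≤ 1 := by
      calc (1 + p * (u⁻¹ - 1)) * u ^ p ≤ (u⁻¹) ^ p * u ^ p :=
            mul_le_mul_of_nonneg_right hb hup.le
        _ = 1 := hprod
    have hsplit : u ^ p * u⁻¹ = u ^ (p-1) := by
      rw [← Real.rpow_neg_one u, ← Real.rpow_add hu]; ring_nf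
    have hupm : u ^ (p-1) ≤ 2 ^ (p-1) := Real.rpow_le_rpow hu.le hu2 (by linarith)
    have h1u : (1:ℝ) ≤ u ^ p := by
      calc (1:ℝ) = 1 ^ p := (Real.one_rpow p).symm
        _ ≤ u ^ p := Real.rpow_le_rpow zero_le_one h.le (by linarith)
    rw [abs_of_nonpos (by linarith), abs_of_nonpos (by linarith)]
    -- u^p - 1 ≤ p * u^(p-1) * (u-1) ≤ p * 2^(p-1) * (u-1)
    have hsplit2 : u ^ (p-1) * u = u ^ p := by
      have hh := Real.rpow_add hu (p-1) 1
      rw [Real.rpow_one] at hh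
      rw [show p - 1 + 1 = p by ring] at hh
      exact hh.symm
    have hs3 : p * (u ^ p * u⁻¹) = p * u ^ (p-1) := by rw [hsplit]
    have hs4 : p * (u ^ (p-1) * u) = p * u ^ p := by rw [hsplit2]
    have hkey : u ^ p - 1 ≤ p * (u ^ (p-1)) * (u - 1) := by
      nlinarith [hmul, hs3, hs4]
    have hfin : p * (u ^ (p-1)) * (u - 1) ≤ p * 2 ^ (p-1) * (u - 1) := by
      have : p * (u ^ (p-1)) ≤ p * 2 ^ (p-1) :=
        mul_le_mul_of_nonneg_left hupm (by linarith)
      exact mul_le_mul_of_nonneg_right this (by linarith)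
    linarith

section alphaeq
variable {V : ℝ → ℂ} (hVmeas : Measurable V)
  (hV : IntegrableOn (fun s : ℝ => s * ‖V s‖) (Set.Ioc 0 1))

include hVmeas hV in
lemma alpha_eq {ℓ : ℝ} (hℓ : 0 ≤ ℓ) {x : ℝ} (hx : x ∈ Set.Ioc (0:ℝ) 1) :
    sppsW ℓ V x / ((x ^ (ℓ+1) : ℝ) : ℂ)
      = 1 + (1/(2*ℓ+1) : ℝ) • (prim V (sppsW ℓ V) (-ℓ) x
          - ((x ^ (-(2*ℓ+1)) : ℝ)) • prim V (sppsW ℓ V) (ℓ+1) x) := by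
  have hx0 : (0:ℝ) < x := hx.1
  have hxp : (0:ℝ) < x ^ (ℓ+1) := Real.rpow_pos_of_pos hx0 _
  have hc : ((x ^ (ℓ+1) : ℝ) : ℂ) ≠ 0 := by exact_mod_cast ne_of_gt hxp
  have hxx : x ^ (-(2*ℓ+1)) * x ^ (ℓ+1) = x ^ (-ℓ) := by
    rw [← Real.rpow_add hx0]; ring_nf
  have hxxC : ((x ^ (-(2*ℓ+1)) : ℝ) : ℂ) * ((x ^ (ℓ+1) : ℝ) : ℂ) = ((x ^ (-ℓ) : ℝ) : ℂ) := by
    exact_mod_cast congrArg (fun t : ℝ => (t : ℂ)) hxx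
  have h2l : ((2*ℓ+1 : ℝ) : ℂ) ≠ 0 := by
    have : (2*ℓ+1 : ℝ) ≠ 0 := by linarith
    exact_mod_cast this
  rw [w_eq hVmeas hV hℓ hx]
  set P1 := prim V (sppsW ℓ V) (-ℓ) x
  set P2 := prim V (sppsW ℓ V) (ℓ+1) x
  simp only [Complex.real_smul]
  rw [div_eq_iff hc]
  linear_combination ((1/(2*ℓ+1) : ℝ) : ℂ) * P2 * hxxC

end alphaeq
section deriv
variable {V : ℝ → ℂ} (hVmeas : Measurable V)
  (hV : IntegrableOn (fun s : ℝ => s * ‖V s‖) (Set.Ioc 0 1))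

include hVmeas hV in
lemma alpha_hasDeriv {ℓ : ℝ} (hℓ : 0 ≤ ℓ) {r : ℝ} (hr : r ∈ Set.Ioc (0:ℝ) 1) :
    HasDerivWithinAt (fun x => sppsW ℓ V x / ((x ^ (ℓ+1) : ℝ) : ℂ))
      (((r ^ (-(2*ℓ+2)) : ℝ)) • prim V (sppsW ℓ V) (ℓ+1) r) (Set.Icc 0 1) r := by
  have hr0 : (0:ℝ) < r := hr.1
  have hwaesm := w_aesm hVmeas hV hℓ
  have hwb := w_bound' hVmeas hV hℓ
  have hE1 : (0:ℝ) < 2 * Real.exp (2 * Qf V 1) := by positivity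
  have hA_int : IntegrableOn (fun s => ((s ^ (-ℓ) : ℝ)) • (V s * sppsW ℓ V s)) (Set.Ioc 0 1) :=
    prim_integrand_integrable hVmeas hV hwaesm hℓ (by linarith) hE1.le hwb
  have hB_int : IntegrableOn (fun s => ((s ^ (ℓ+1) : ℝ)) • (V s * sppsW ℓ V s)) (Set.Ioc 0 1) :=
    prim_integrand_integrable hVmeas hV hwaesm hℓ (p := ℓ+1) (by linarith) hE1.le hwb
  -- difference formula
  have hsub : ∀ u v x' : ℝ, 0 ≤ u → u ≤ v → v ≤ 1 → 0 < x' →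
      (prim V (sppsW ℓ V) (-ℓ) v - prim V (sppsW ℓ V) (-ℓ) u)
        - ((x' ^ (-(2*ℓ+1)) : ℝ)) • (prim V (sppsW ℓ V) (ℓ+1) v - prim V (sppsW ℓ V) (ℓ+1) u)
      = ∫ s in Set.Ioc u v,
          ((s ^ (-ℓ) - x' ^ (-(2*ℓ+1)) * s ^ (ℓ+1) : ℝ)) • (V s * sppsW ℓ V s) := by
    intro u v x' hu huv hv hx'
    have e1 : prim V (sppsW ℓ V) (-ℓ) v - prim V (sppsW ℓ V) (-ℓ) u
        = ∫ s in Set.Ioc u v, ((s ^ (-ℓ) : ℝ)) • (V s * sppsW ℓ V s) := by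
      have h := primdiff hA_int hu huv hv
      rw [prim, prim, h]; ring
    have e2 : prim V (sppsW ℓ V) (ℓ+1) v - prim V (sppsW ℓ V) (ℓ+1) u
        = ∫ s in Set.Ioc u v, ((s ^ (ℓ+1) : ℝ)) • (V s * sppsW ℓ V s) := by
      have h := primdiff hB_int hu huv hv
      rw [prim, prim, h]; ring
    have hi1 : IntegrableOn (fun s => ((s ^ (-ℓ) : ℝ)) • (V s * sppsW ℓ V s)) (Set.Ioc u v) :=
      hA_int.mono_set (Set.Ioc_subset_Ioc hu hv)
    have hi2 : Integrable
        (fun s => ((x' ^ (-(2*ℓ+1)) : ℝ)) • (((s ^ (ℓ+1) : ℝ)) • (V s * sppsW ℓ V s)))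
        (volume.restrict (Set.Ioc u v)) :=
      (hB_int.mono_set (Set.Ioc_subset_Ioc hu hv)).fun_smul _
    rw [e1, e2, ← MeasureTheory.integral_smul, ← MeasureTheory.integral_sub hi1 hi2]
    apply MeasureTheory.setIntegral_congr_fun measurableSet_Ioc
    intro s _
    simp only [sub_smul, smul_smul]
  -- little-o estimate
  have hlittle : (fun x => (prim V (sppsW ℓ V) (-ℓ) x - prim V (sppsW ℓ V) (-ℓ) r)
      - ((x ^ (-(2*ℓ+1)) : ℝ)) • (prim V (sppsW ℓ V) (ℓ+1) x - prim V (sppsW ℓ V) (ℓ+1) r))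
      =o[nhdsWithin r (Set.Icc 0 1)] (fun x => x - r) := by
    rw [Asymptotics.isLittleO_iff]
    intro C hC
    set κ₀ : ℝ := ((2*ℓ+1) * 2 ^ (2*ℓ)) * (2/r) * (2 * Real.exp (2 * Qf V 1)) with hκ₀
    have h2l : (0:ℝ) < 2 ^ (2*ℓ) := Real.rpow_pos_of_pos (by norm_num) _
    have hκ₀pos : 0 < κ₀ := by
      apply mul_pos (mul_pos (by nlinarith) (by positivity)) hE1
    have hκpos : (0:ℝ) < κ₀ + 1 := by positivity
    set ε' := C / (κ₀ + 1) with hε'def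
    have hε' : 0 < ε' := div_pos hC hκpos
    have h1 : ∀ᶠ x in nhdsWithin r (Set.Icc 0 1), |x - r| < r/2 :=
      (eventually_abs_sub_lt r (by linarith : (0:ℝ) < r/2)).filter_mono nhdsWithin_le_nhds
    have hQw : ContinuousWithinAt (Qf V) (Set.Icc 0 1) r :=
      (Qf_cont hV) r (Set.Ioc_subset_Icc_self hr)
    have h2 : ∀ᶠ x in nhdsWithin r (Set.Icc 0 1), |Qf V x - Qf V r| < ε' := by
      have hh := Metric.tendsto_nhds.mp hQw ε' hε'
      filter_upwards [hh] with x hx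
      rwa [Real.dist_eq] at hx
    have h3 : ∀ᶠ x in nhdsWithin r (Set.Icc 0 1), x ∈ Set.Icc (0:ℝ) 1 :=
      eventually_mem_nhdsWithin
    filter_upwards [h1, h2, h3] with x hx1 hx2 hx3
    have habslt := abs_lt.1 hx1
    have hx0 : (0:ℝ) < x := by linarith
    set lo := min x r with hlo
    set hi := max x r with hhi
    have hlo0 : (0:ℝ) < lo := lt_min hx0 hr0
    have hhi1 : hi ≤ 1 := max_le hx3.2 hr.2
    have hlohi : lo ≤ hi := min_le_max
    have hxlo : lo ≤ x := min_le_left _ _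
    have hxhi : x ≤ hi := le_max_left _ _
    have hlen : hi - lo = |x - r| := by
      rcases le_total x r with h | h
      · rw [hlo, hhi, min_eq_left h, max_eq_right h, abs_of_nonpos (by linarith)]; ring
      · rw [hlo, hhi, min_eq_right h, max_eq_left h, abs_of_nonneg (by linarith)]
    have hhix : hi ≤ 2 * x := by
      rcases le_total x r with h | h
      · rw [hhi, max_eq_right h]; linarith
      · rw [hhi, max_eq_left h]; linarith
    -- norm as a single integral
    have hnorm : ‖(prim V (sppsW ℓ V) (-ℓ) x - prim V (sppsW ℓ V) (-ℓ) r)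
        - ((x ^ (-(2*ℓ+1)) : ℝ)) • (prim V (sppsW ℓ V) (ℓ+1) x - prim V (sppsW ℓ V) (ℓ+1) r)‖
        = ‖∫ s in Set.Ioc lo hi,
            ((s ^ (-ℓ) - x ^ (-(2*ℓ+1)) * s ^ (ℓ+1) : ℝ)) • (V s * sppsW ℓ V s)‖ := by
      rcases le_total r x with h | h
      · rw [hlo, hhi, min_eq_right h, max_eq_left h, ← hsub r x x hr0.le h hx3.2 hx0]
      · rw [hlo, hhi, min_eq_left h, max_eq_right h, ← hsub x r x hx0.le h hr.2 hx0,
          show (prim V (sppsW ℓ V) (-ℓ) x - prim V (sppsW ℓ V) (-ℓ) r)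
            - ((x ^ (-(2*ℓ+1)) : ℝ)) • (prim V (sppsW ℓ V) (ℓ+1) x - prim V (sppsW ℓ V) (ℓ+1) r)
          = -((prim V (sppsW ℓ V) (-ℓ) r - prim V (sppsW ℓ V) (-ℓ) x)
            - ((x ^ (-(2*ℓ+1)) : ℝ)) • (prim V (sppsW ℓ V) (ℓ+1) r - prim V (sppsW ℓ V) (ℓ+1) x))
          from by rw [smul_sub, smul_sub]; abel, norm_neg]
    rw [hnorm]
    -- integrand bound
    have hbd : ∀ᵐ s ∂(volume.restrict (Set.Ioc lo hi)),
        ‖((s ^ (-ℓ) - x ^ (-(2*ℓ+1)) * s ^ (ℓ+1) : ℝ)) • (V s * sppsW ℓ V s)‖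
          ≤ (κ₀ * |x - r|) * (s * ‖V s‖) := by
      filter_upwards [MeasureTheory.ae_restrict_mem measurableSet_Ioc] with s hs
      have hs0 : (0:ℝ) < s := hlo0.trans hs.1
      have hs1 : s ∈ Set.Ioc (0:ℝ) 1 := ⟨hs0, hs.2.trans hhi1⟩
      set u := s / x with hu
      have hu0 : 0 < u := div_pos hs0 hx0
      have hu2 : u ≤ 2 := by
        rw [hu, div_le_iff₀ hx0]
        calc s ≤ hi := hs.2
          _ ≤ 2 * x := hhix
      have hdecomp : x ^ (-(2*ℓ+1)) * s ^ (ℓ+1) = s ^ (-ℓ) * u ^ (2*ℓ+1) := by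
        rw [hu, Real.div_rpow hs0.le hx0.le, Real.rpow_neg hx0.le]
        have e1 : s ^ (-ℓ) * s ^ (2*ℓ+1) = s ^ (ℓ+1) := by
          rw [← Real.rpow_add hs0]; ring_nf
        rw [← e1]; ring
      have scancel : s ^ (-ℓ) * s ^ (ℓ+1) = s := by
        rw [← Real.rpow_add hs0, show -ℓ + (ℓ+1) = (1:ℝ) by ring, Real.rpow_one]
      have habs1 : |1 - u ^ (2*ℓ+1)| ≤ (2*ℓ+1) * 2 ^ (2*ℓ) * |1 - u| := by
        have h := abs_one_sub_rpow hu0 hu2 (by linarith : (1:ℝ) ≤ 2*ℓ+1)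
        rwa [show (2*ℓ+1) - 1 = 2*ℓ by ring] at h
      have habs2 : |1 - u| ≤ (2/r) * |x - r| := by
        rw [hu, show (1 : ℝ) - s/x = (x - s)/x by field_simp, abs_div, abs_of_pos hx0]
        have hxs : |x - s| ≤ |x - r| := by
          rw [abs_le]
          constructor
          · have := hs.2; have := hs.1; linarith [hlen]
          · have := hs.1; have := hs.2; linarith [hlen]
        calc |x - s| / x ≤ |x - r| / x := by gcongr
          _ ≤ |x - r| / (r/2) := by gcongr <;> linarith
          _ = (2/r) * |x - r| := by field_simp
      have hwnorm := hwb s hs1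
      calc ‖((s ^ (-ℓ) - x ^ (-(2*ℓ+1)) * s ^ (ℓ+1) : ℝ)) • (V s * sppsW ℓ V s)‖
          = (s ^ (-ℓ) * |1 - u ^ (2*ℓ+1)|) * (‖V s‖ * ‖sppsW ℓ V s‖) := by
            rw [norm_smul, Real.norm_eq_abs, norm_mul, hdecomp, ← mul_one_sub, abs_mul,
              abs_of_nonneg (Real.rpow_nonneg hs0.le _)]
        _ ≤ (s ^ (-ℓ) * ((2*ℓ+1) * 2 ^ (2*ℓ) * ((2/r) * |x - r|)))
              * (‖V s‖ * ((2 * Real.exp (2 * Qf V 1)) * s ^ (ℓ+1))) := by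
            apply mul_le_mul
            · apply mul_le_mul_of_nonneg_left _ (Real.rpow_nonneg hs0.le _)
              calc |1 - u ^ (2*ℓ+1)| ≤ (2*ℓ+1) * 2 ^ (2*ℓ) * |1 - u| := habs1
                _ ≤ (2*ℓ+1) * 2 ^ (2*ℓ) * ((2/r) * |x - r|) := by
                    apply mul_le_mul_of_nonneg_left habs2 (by positivity)
            · exact mul_le_mul_of_nonneg_left hwnorm (norm_nonneg _)
            · exact mul_nonneg (norm_nonneg _) (norm_nonneg _)
            · positivity
        _ = (κ₀ * |x - r|) * (s * ‖V s‖) := by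
            rw [hκ₀]
            linear_combination ((2*ℓ+1) * 2 ^ (2*ℓ) * (2/r) * |x - r| * ‖V s‖
              * (2 * Real.exp (2 * Qf V 1))) * scancel
    have hint : Integrable (fun s => (κ₀ * |x - r|) * (s * ‖V s‖))
        (volume.restrict (Set.Ioc lo hi)) :=
      ((hV.mono_set (Set.Ioc_subset_Ioc hlo0.le hhi1)).const_mul _)
    have hQd : Qf V hi - Qf V lo ≤ ε' := by
      rcases le_total r x with h | h
      · rw [hlo, hhi, min_eq_right h, max_eq_left h]
        calc Qf V x - Qf V r ≤ |Qf V x - Qf V r| := le_abs_self _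
          _ ≤ ε' := hx2.le
      · rw [hlo, hhi, min_eq_left h, max_eq_right h]
        calc Qf V r - Qf V x ≤ |Qf V x - Qf V r| := by
              rw [abs_sub_comm]; exact le_abs_self _
          _ ≤ ε' := hx2.le
    calc ‖∫ s in Set.Ioc lo hi,
          ((s ^ (-ℓ) - x ^ (-(2*ℓ+1)) * s ^ (ℓ+1) : ℝ)) • (V s * sppsW ℓ V s)‖
        ≤ ∫ s in Set.Ioc lo hi, (κ₀ * |x - r|) * (s * ‖V s‖) :=
          MeasureTheory.norm_integral_le_of_norm_le hint hbd
      _ = (κ₀ * |x - r|) * ∫ s in Set.Ioc lo hi, s * ‖V s‖ := MeasureTheory.integral_const_mul _ _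
      _ = (κ₀ * |x - r|) * (Qf V hi - Qf V lo) := by rw [Qf_sub hV hlo0.le hlohi hhi1]
      _ ≤ (κ₀ * |x - r|) * ε' := by
          apply mul_le_mul_of_nonneg_left hQd (by positivity)
      _ ≤ C * ‖x - r‖ := by
          rw [Real.norm_eq_abs]
          have hfrac : κ₀ * ε' ≤ C := by
            rw [hε'def, show κ₀ * (C / (κ₀+1)) = (κ₀ / (κ₀+1)) * C by ring]
            have hd1 : κ₀ / (κ₀+1) ≤ 1 := by rw [div_le_one hκpos]; linarith
            nlinarith
          nlinarith [abs_nonneg (x - r), hκ₀pos, hε'.le]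
  -- assemble the derivative
  have hG1 : HasDerivWithinAt (fun x => prim V (sppsW ℓ V) (-ℓ) x
      - ((x ^ (-(2*ℓ+1)) : ℝ)) • (prim V (sppsW ℓ V) (ℓ+1) x - prim V (sppsW ℓ V) (ℓ+1) r))
      0 (Set.Icc 0 1) r := by
    rw [hasDerivWithinAt_iff_isLittleO]
    apply Asymptotics.IsLittleO.congr' hlittle _ EventuallyEq.rfl
    filter_upwards with x'
    simp only [sub_self, smul_zero, sub_zero]
    rw [sub_right_comm]
  have hG2 : HasDerivWithinAt (fun x : ℝ => ((x ^ (-(2*ℓ+1)) : ℝ)) • prim V (sppsW ℓ V) (ℓ+1) r)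
      ((((-(2*ℓ+1)) * r ^ (-(2*ℓ+1)-1) : ℝ)) • prim V (sppsW ℓ V) (ℓ+1) r) (Set.Icc 0 1) r :=
    ((Real.hasDerivAt_rpow_const (p := -(2*ℓ+1))
      (Or.inl (ne_of_gt hr0))).hasDerivWithinAt).smul_const _
  have hG : HasDerivWithinAt (fun x => prim V (sppsW ℓ V) (-ℓ) x
      - ((x ^ (-(2*ℓ+1)) : ℝ)) • prim V (sppsW ℓ V) (ℓ+1) x)
      (((2*ℓ+1) * r ^ (-(2*ℓ+2)) : ℝ) • prim V (sppsW ℓ V) (ℓ+1) r) (Set.Icc 0 1) r := by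
    have h := hG1.sub hG2
    have heqf : ∀ y : ℝ, prim V (sppsW ℓ V) (-ℓ) y
        - ((y ^ (-(2*ℓ+1)) : ℝ)) • prim V (sppsW ℓ V) (ℓ+1) y
        = (prim V (sppsW ℓ V) (-ℓ) y
          - ((y ^ (-(2*ℓ+1)) : ℝ)) • (prim V (sppsW ℓ V) (ℓ+1) y - prim V (sppsW ℓ V) (ℓ+1) r))
          - ((y ^ (-(2*ℓ+1)) : ℝ)) • prim V (sppsW ℓ V) (ℓ+1) r := by
      intro y
      rw [smul_sub]
      abel
    have hder : (0:ℂ) - (((-(2*ℓ+1)) * r ^ (-(2*ℓ+1)-1) : ℝ)) • prim V (sppsW ℓ V) (ℓ+1) r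
        = (((2*ℓ+1) * r ^ (-(2*ℓ+2)) : ℝ)) • prim V (sppsW ℓ V) (ℓ+1) r := by
      rw [zero_sub, ← neg_smul, show -(2*ℓ+1)-1 = -(2*ℓ+2) by ring]
      simp only [Complex.real_smul]
      push_cast
      ring
    rw [← hder]
    exact h.congr (fun y _ => heqf y) (heqf r)
  have hF : HasDerivWithinAt (fun x => 1 + (1/(2*ℓ+1) : ℝ) • (prim V (sppsW ℓ V) (-ℓ) x
      - ((x ^ (-(2*ℓ+1)) : ℝ)) • prim V (sppsW ℓ V) (ℓ+1) x))
      (((r ^ (-(2*ℓ+2)) : ℝ)) • prim V (sppsW ℓ V) (ℓ+1) r) (Set.Icc 0 1) r := by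
    have h := (hG.const_smul ((1/(2*ℓ+1) : ℝ))).const_add (1:ℂ)
    have hsc : (1/(2*ℓ+1) : ℝ) • ((((2*ℓ+1) * r ^ (-(2*ℓ+2)) : ℝ)) • prim V (sppsW ℓ V) (ℓ+1) r)
        = ((r ^ (-(2*ℓ+2)) : ℝ)) • prim V (sppsW ℓ V) (ℓ+1) r := by
      rw [smul_smul]
      congr 1
      field_simp
    rwa [hsc] at h
  have hmemIoc : Set.Ioc (0:ℝ) 1 ∈ nhdsWithin r (Set.Icc 0 1) := by
    have h := inter_mem_nhdsWithin (Set.Icc (0:ℝ) 1) (Ioi_mem_nhds hr0)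
    have heq : Set.Icc (0:ℝ) 1 ∩ Set.Ioi 0 = Set.Ioc 0 1 := by
      ext y
      simp only [Set.mem_inter_iff, Set.mem_Icc, Set.mem_Ioi, Set.mem_Ioc]
      constructor
      · rintro ⟨⟨_, h1⟩, h2⟩; exact ⟨h2, h1⟩
      · rintro ⟨h2, h1⟩; exact ⟨⟨h2.le, h1⟩, h2⟩
    rwa [heq] at h
  have heqev : (fun x => sppsW ℓ V x / ((x ^ (ℓ+1) : ℝ) : ℂ))
      =ᶠ[nhdsWithin r (Set.Icc 0 1)] (fun x => 1 + (1/(2*ℓ+1) : ℝ) • (prim V (sppsW ℓ V) (-ℓ) x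
        - ((x ^ (-(2*ℓ+1)) : ℝ)) • prim V (sppsW ℓ V) (ℓ+1) x)) := by
    filter_upwards [hmemIoc] with x hx
    exact alpha_eq hVmeas hV hℓ hx
  exact hF.congr_of_eventuallyEq heqev (alpha_eq hVmeas hV hℓ hr)

end deriv
section final
variable {V : ℝ → ℂ} (hVmeas : Measurable V)
  (hV : IntegrableOn (fun s : ℝ => s * ‖V s‖) (Set.Ioc 0 1))

include hVmeas hV in
lemma B_norm_le {ℓ : ℝ} (hℓ : 0 ≤ ℓ) {r : ℝ} (hr : r ∈ Set.Ioc (0:ℝ) 1) :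
    ‖prim V (sppsW ℓ V) (ℓ+1) r‖
      ≤ ((2 * Real.exp (2 * Qf V 1)) * r ^ (2*ℓ+1)) * Qf V 1 := by
  have hr0 : (0:ℝ) < r := hr.1
  have hwb := w_bound' hVmeas hV hℓ
  have hint : Integrable (fun s => ((2 * Real.exp (2 * Qf V 1)) * r ^ (2*ℓ+1)) * (s * ‖V s‖))
      (volume.restrict (Set.Ioc (0:ℝ) r)) :=
    (hV.mono_set (Set.Ioc_subset_Ioc le_rfl hr.2)).const_mul _
  have hbd : ∀ᵐ s ∂(volume.restrict (Set.Ioc (0:ℝ) r)),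
      ‖((s ^ (ℓ+1) : ℝ)) • (V s * sppsW ℓ V s)‖
        ≤ ((2 * Real.exp (2 * Qf V 1)) * r ^ (2*ℓ+1)) * (s * ‖V s‖) := by
    filter_upwards [MeasureTheory.ae_restrict_mem measurableSet_Ioc] with s hs
    have hs0 : (0:ℝ) < s := hs.1
    have hs1 : s ∈ Set.Ioc (0:ℝ) 1 := ⟨hs.1, hs.2.trans hr.2⟩
    have hcomb : s ^ (ℓ+1) * s ^ (ℓ+1) = s ^ (2*ℓ+1) * s := by
      have a1 : s ^ (ℓ+1) * s ^ (ℓ+1) = s ^ ((ℓ+1)+(ℓ+1)) := (Real.rpow_add hs0 _ _).symm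
      have a2 : s ^ ((2*ℓ+1)+(1:ℝ)) = s ^ (2*ℓ+1) * s ^ (1:ℝ) := Real.rpow_add hs0 _ _
      rw [a1, show (ℓ+1)+(ℓ+1) = (2*ℓ+1)+(1:ℝ) by ring, a2, Real.rpow_one]
    have hsr : s ^ (2*ℓ+1) ≤ r ^ (2*ℓ+1) := Real.rpow_le_rpow hs0.le hs.2 (by linarith)
    rw [norm_smul, Real.norm_eq_abs, abs_of_nonneg (Real.rpow_nonneg hs0.le _), norm_mul]
    calc s ^ (ℓ+1) * (‖V s‖ * ‖sppsW ℓ V s‖)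
        ≤ s ^ (ℓ+1) * (‖V s‖ * ((2 * Real.exp (2 * Qf V 1)) * s ^ (ℓ+1))) := by
          apply mul_le_mul_of_nonneg_left _ (Real.rpow_nonneg hs0.le _)
          exact mul_le_mul_of_nonneg_left (hwb s hs1) (norm_nonneg _)
      _ = (2 * Real.exp (2 * Qf V 1)) * ((s ^ (ℓ+1) * s ^ (ℓ+1)) * ‖V s‖) := by ring
      _ = (2 * Real.exp (2 * Qf V 1)) * ((s ^ (2*ℓ+1) * s) * ‖V s‖) := by rw [hcomb]
      _ ≤ (2 * Real.exp (2 * Qf V 1)) * ((r ^ (2*ℓ+1) * s) * ‖V s‖) := by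
          apply mul_le_mul_of_nonneg_left _ (by positivity)
          apply mul_le_mul_of_nonneg_right _ (norm_nonneg _)
          exact mul_le_mul_of_nonneg_right hsr hs0.le
      _ = ((2 * Real.exp (2 * Qf V 1)) * r ^ (2*ℓ+1)) * (s * ‖V s‖) := by ring
  calc ‖prim V (sppsW ℓ V) (ℓ+1) r‖
      ≤ ∫ s in Set.Ioc (0:ℝ) r, ((2 * Real.exp (2 * Qf V 1)) * r ^ (2*ℓ+1)) * (s * ‖V s‖) :=
        MeasureTheory.norm_integral_le_of_norm_le hint hbd
    _ = ((2 * Real.exp (2 * Qf V 1)) * r ^ (2*ℓ+1)) * ∫ s in Set.Ioc (0:ℝ) r, s * ‖V s‖ :=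
        MeasureTheory.integral_const_mul _ _
    _ ≤ ((2 * Real.exp (2 * Qf V 1)) * r ^ (2*ℓ+1)) * Qf V 1 := by
        apply mul_le_mul_of_nonneg_left _ (by positivity)
        exact Qf_mono hV hr.1.le hr.2 le_rfl

include hVmeas hV in
lemma master {ℓ : ℝ} (hℓ : 0 ≤ ℓ) {r : ℝ} (hr : r ∈ Set.Ioc (0:ℝ) 1) :
    DifferentiableWithinAt ℝ (fun x => sppsW ℓ V x / ((x ^ (ℓ+1) : ℝ) : ℂ)) (Set.Icc 0 1) r ∧
    ‖derivWithin (fun x => sppsW ℓ V x / ((x ^ (ℓ+1) : ℝ) : ℂ)) (Set.Icc 0 1) r‖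
      ≤ (2 * Real.exp (2 * Qf V 1) * Qf V 1) / r := by
  have hr0 : (0:ℝ) < r := hr.1
  have hd := alpha_hasDeriv hVmeas hV hℓ hr
  refine ⟨hd.differentiableWithinAt, ?_⟩
  rw [hd.derivWithin ((uniqueDiffOn_Icc (by norm_num : (0:ℝ) < 1)) r (Set.Ioc_subset_Icc_self hr))]
  rw [norm_smul, Real.norm_eq_abs, abs_of_nonneg (Real.rpow_nonneg hr0.le _)]
  have hBn := B_norm_le hVmeas hV hℓ hr
  have hrr : r ^ (-(2*ℓ+2)) * r ^ (2*ℓ+1) = r⁻¹ := by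
    rw [← Real.rpow_add hr0, show -(2*ℓ+2) + (2*ℓ+1) = (-1:ℝ) by ring, Real.rpow_neg_one]
  calc r ^ (-(2*ℓ+2)) * ‖prim V (sppsW ℓ V) (ℓ+1) r‖
      ≤ r ^ (-(2*ℓ+2)) * (((2 * Real.exp (2 * Qf V 1)) * r ^ (2*ℓ+1)) * Qf V 1) :=
        mul_le_mul_of_nonneg_left hBn (Real.rpow_nonneg hr0.le _)
    _ = (2 * Real.exp (2 * Qf V 1) * Qf V 1) * (r ^ (-(2*ℓ+2)) * r ^ (2*ℓ+1)) := by ring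
    _ = (2 * Real.exp (2 * Qf V 1) * Qf V 1) / r := by rw [hrr, div_eq_mul_inv]

end final

/-- There exist constants `C₁, C₂ > 0` (depending only on `d` and `∫₀¹ s|V(s)| ds`)
with `|α_m'(r)| ≤ m C₁ / r` for all `m ≥ 1` and `|α₀'(r)| ≤ C₂ / r`, on `(0,1]`. -/
theorem alphaFun_deriv_bound (d : ℕ) (hd : 3 ≤ d) (V : ℝ → ℂ) (hVmeas : Measurable V)
    (hV : IntegrableOn (fun s : ℝ => s * ‖V s‖) (Set.Ioc 0 1)) :
    ∃ C₁ > (0 : ℝ), ∃ C₂ > (0 : ℝ),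
      (∀ m : ℕ, 1 ≤ m → ∀ r ∈ Set.Ioc (0 : ℝ) 1,
        DifferentiableWithinAt ℝ (alphaFun d V m) (Set.Icc 0 1) r ∧
        ‖derivWithin (alphaFun d V m) (Set.Icc 0 1) r‖ ≤ (m : ℝ) * C₁ / r) ∧
      (∀ r ∈ Set.Ioc (0 : ℝ) 1,
        DifferentiableWithinAt ℝ (alphaFun d V 0) (Set.Icc 0 1) r ∧
        ‖derivWithin (alphaFun d V 0) (Set.Icc 0 1) r‖ ≤ C₂ / r) := by
  have hQ1 : (0:ℝ) ≤ Qf V 1 := Qf_nonneg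
  set C : ℝ := 2 * Real.exp (2 * Qf V 1) * Qf V 1 + 1 with hC
  have hCpos : (0:ℝ) < C := by positivity
  have hC0le : 2 * Real.exp (2 * Qf V 1) * Qf V 1 ≤ C := by rw [hC]; linarith
  have hell : ∀ m : ℕ, 0 ≤ ellm d m := by
    intro m
    rw [ellm]
    have h3 : (3:ℝ) ≤ (d:ℝ) := by exact_mod_cast hd
    have hm0 : (0:ℝ) ≤ (m:ℝ) := Nat.cast_nonneg m
    linarith
  refine ⟨C, hCpos, C, hCpos, ?_, ?_⟩
  · intro m hm r hr
    have h := master hVmeas hV (hell m) hr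
    refine ⟨h.1, ?_⟩
    have hm1 : (1:ℝ) ≤ (m:ℝ) := by exact_mod_cast hm
    calc ‖derivWithin (alphaFun d V m) (Set.Icc 0 1) r‖
        ≤ (2 * Real.exp (2 * Qf V 1) * Qf V 1) / r := h.2
      _ ≤ (m:ℝ) * C / r := by
          have hnum : 2 * Real.exp (2 * Qf V 1) * Qf V 1 ≤ (m:ℝ) * C := by nlinarith
          gcongr <;> first | exact hr.1.le | exact hnum
  · intro r hr
    have h := master hVmeas hV (hell 0) hr
    refine ⟨h.1, ?_⟩
    calc ‖derivWithin (alphaFun d V 0) (Set.Icc 0 1) r‖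
        ≤ (2 * Real.exp (2 * Qf V 1) * Qf V 1) / r := h.2
      _ ≤ C / r := by gcongr <;> first | exact hr.1.le | exact hC0le
end
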